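/- Let ε > 0 and let ≽ be a continuous weak order on the simplex Δ ⊆ ℝ^{d+1} that is nontrivial (there exist p, q ∈ Δ with p ≻ q) and satisfies ε-Independence: if p ∼ q, α ∈ [0,1] and r ∈ Δ, then there is α' ∈ [0,1] with |α−α'| < ε such that αp+(1−α)r ∼ α'q+(1−α')r. Then there exist functions u, ℓ : Δ → ℝ such that: (1) u represents ≽, u(Δ) = ℓ(Δ) = [0,1], and u(δᵢ) = ℓ(δᵢ) for every degenerate lottery δᵢ, i = 1,…,d+1; (2) ℓ is affine, i.e. ℓ(λp+(1−λ)q) = λℓ(p)+(1−λ)ℓ(q) for all p,q ∈ Δ and λ ∈ [0,1]; (3) sup_{p∈Δ}|u(p)−ℓ(p)| < (d+1)²·ε. -/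
import Mathlib
set_option maxHeartbeats 1000000

namespace EU3

open Set

variable {n : ℕ} {ε : ℝ} {R : (Fin n → ℝ) → (Fin n → ℝ) → Prop}

/-- Bundle of the hypotheses. -/
structure H (n : ℕ) (ε : ℝ) (R : (Fin n → ℝ) → (Fin n → ℝ) → Prop) : Prop where
  comp : ∀ p ∈ stdSimplex ℝ (Fin n), ∀ q ∈ stdSimplex ℝ (Fin n), R p q ∨ R q p
  trans : ∀ p ∈ stdSimplex ℝ (Fin n), ∀ q ∈ stdSimplex ℝ (Fin n),
    ∀ r ∈ stdSimplex ℝ (Fin n), R p q → R q r → R p r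
  cont : ∀ p ∈ stdSimplex ℝ (Fin n),
    IsClosed {q | q ∈ stdSimplex ℝ (Fin n) ∧ R q p} ∧
    IsClosed {q | q ∈ stdSimplex ℝ (Fin n) ∧ R p q}
  nontriv : ∃ p ∈ stdSimplex ℝ (Fin n), ∃ q ∈ stdSimplex ℝ (Fin n), R p q ∧ ¬ R q p
  indep : ∀ p ∈ stdSimplex ℝ (Fin n), ∀ q ∈ stdSimplex ℝ (Fin n), (R p q ∧ R q p) →
      ∀ α ∈ Set.Icc (0 : ℝ) 1, ∀ r ∈ stdSimplex ℝ (Fin n), ∃ α' ∈ Set.Icc (0 : ℝ) 1,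
        |α - α'| < ε ∧
        (R (α • p + (1 - α) • r) (α' • q + (1 - α') • r) ∧
          R (α' • q + (1 - α') • r) (α • p + (1 - α) • r))

local notation "S" => stdSimplex ℝ (Fin n)

lemma H.refl (h : H n ε R) {p : Fin n → ℝ} (hp : p ∈ S) : R p p :=
  (h.comp p hp p hp).elim id id

lemma mix_mem {p q : Fin n → ℝ} (hp : p ∈ S) (hq : q ∈ S) {t : ℝ}
    (ht : t ∈ Icc (0:ℝ) 1) : t • p + (1 - t) • q ∈ S :=
  convex_stdSimplex ℝ (Fin n) hp hq ht.1 (by linarith [ht.2]) (by ring)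

/-- connectedness/IVT helper : an indifference point exists on a continuous path. -/
lemma exists_indiff (h : H n ε R) {f : ℝ → Fin n → ℝ} (hf : Continuous f)
    {a c : ℝ} (hac : a ≤ c) (hfS : ∀ t ∈ Icc a c, f t ∈ S)
    {x : Fin n → ℝ} (hx : x ∈ S)
    (hA : ∃ t₀ ∈ Icc a c, R (f t₀) x) (hB : ∃ t₁ ∈ Icc a c, R x (f t₁)) :
    ∃ t ∈ Icc a c, R (f t) x ∧ R x (f t) := by
  classical
  set A : Set ℝ := {t | t ∈ Icc a c ∧ R (f t) x} with hAdef
  set B : Set ℝ := {t | t ∈ Icc a c ∧ R x (f t)} with hBdef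
  have hAc : IsClosed A := by
    have : A = Icc a c ∩ f ⁻¹' {q | q ∈ S ∧ R q x} := by
      ext t
      constructor
      · rintro ⟨ht, hr⟩; exact ⟨ht, hfS t ht, hr⟩
      · rintro ⟨ht, _, hr⟩; exact ⟨ht, hr⟩
    rw [this]
    exact isClosed_Icc.inter ((h.cont x hx).1.preimage hf)
  have hBc : IsClosed B := by
    have : B = Icc a c ∩ f ⁻¹' {q | q ∈ S ∧ R x q} := by
      ext t
      constructor
      · rintro ⟨ht, hr⟩; exact ⟨ht, hfS t ht, hr⟩
      · rintro ⟨ht, _, hr⟩; exact ⟨ht, hr⟩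
    rw [this]
    exact isClosed_Icc.inter ((h.cont x hx).2.preimage hf)
  have hcover : Icc a c ⊆ A ∪ B := by
    intro t ht
    rcases h.comp (f t) (hfS t ht) x hx with h1 | h1
    · exact Or.inl ⟨ht, h1⟩
    · exact Or.inr ⟨ht, h1⟩
  obtain ⟨t₀, ht₀, hra⟩ := hA
  obtain ⟨t₁, ht₁, hrb⟩ := hB
  have hne1 : (Icc a c ∩ A).Nonempty := ⟨t₀, ht₀, ht₀, hra⟩
  have hne2 : (Icc a c ∩ B).Nonempty := ⟨t₁, ht₁, ht₁, hrb⟩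
  obtain ⟨t, htIcc, htA, htB⟩ :=
    (isPreconnected_closed_iff.mp isPreconnected_Icc) A B hAc hBc hcover hne1 hne2
  exact ⟨t, htIcc, htA.2, htB.2⟩

/-- Indifference classes are convex (mixing towards an indifferent lottery). -/
lemma sim_mix (h : H n ε R) {p q : Fin n → ℝ} (hp : p ∈ S) (hq : q ∈ S)
    (hpq : R p q ∧ R q p) {t : ℝ} (ht : t ∈ Icc (0:ℝ) 1) :
    R (t • p + (1 - t) • q) q ∧ R q (t • p + (1 - t) • q) := by
  obtain ⟨α', _, _, h1, h2⟩ := h.indep p hp q hq hpq t ht q hq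
  have e : α' • q + (1 - α') • q = q := by module
  rw [e] at h1 h2
  exact ⟨h1, h2⟩

/-- Betweenness, upper half: a mixture is not better than the better component. -/
lemma between_upper (h : H n ε R) {p q : Fin n → ℝ} (hp : p ∈ S) (hq : q ∈ S)
    (hpq : R p q) {t : ℝ} (ht : t ∈ Icc (0:ℝ) 1) :
    R p (t • p + (1 - t) • q) := by
  classical
  by_contra hcon
  set f : ℝ → Fin n → ℝ := fun μ => μ • p + (1 - μ) • q with hfdef
  have hfc : Continuous f := by
    apply Continuous.add
    · exact continuous_id.smul continuous_const
    · exact (continuous_const.sub continuous_id).smul continuous_const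
  have hf0 : f 0 = q := by simp only [hfdef]; module
  have hf1 : f 1 = p := by simp only [hfdef]; module
  have hfS : ∀ μ ∈ Icc (0:ℝ) 1, f μ ∈ S := fun μ hμ => mix_mem hp hq hμ
  have hftS : f t ∈ S := hfS t ht
  have hstrict : R (f t) p := by
    rcases h.comp (f t) hftS p hp with h1 | h1
    · exact h1
    · exact absurd h1 hcon
  -- find indifference points on [t,1] and [0,t]
  have hfS1 : ∀ μ ∈ Icc t 1, f μ ∈ S := fun μ hμ => hfS μ ⟨le_trans ht.1 hμ.1, hμ.2⟩
  have hfS0 : ∀ μ ∈ Icc 0 t, f μ ∈ S := fun μ hμ => hfS μ ⟨hμ.1, le_trans hμ.2 ht.2⟩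
  obtain ⟨t₁, ht₁, hsim1⟩ := exists_indiff h hfc ht.2 hfS1 hp
    ⟨t, ⟨le_refl _, ht.2⟩, hstrict⟩ ⟨1, ⟨ht.2, le_refl _⟩, by rw [hf1]; exact h.refl hp⟩
  obtain ⟨t₀, ht₀, hsim0⟩ := exists_indiff h hfc ht.1 hfS0 hp
    ⟨t, ⟨ht.1, le_refl _⟩, hstrict⟩ ⟨0, ⟨le_refl _, ht.1⟩, by rw [hf0]; exact hpq⟩
  -- f t is a mixture of f t₀ and f t₁, both indifferent to p
  have ht₀S : f t₀ ∈ S := hfS0 t₀ ht₀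
  have ht₁S : f t₁ ∈ S := hfS1 t₁ ht₁
  rcases eq_or_lt_of_le (le_trans ht₀.2 ht₁.1 : t₀ ≤ t₁) with heq | hlt
  · -- then t₀ = t = t₁
    have : t₀ = t := le_antisymm ht₀.2 (heq ▸ ht₁.1)
    exact hcon (this ▸ hsim0.2)
  · set lam : ℝ := (t - t₀) / (t₁ - t₀) with hlam
    have hlam0 : 0 ≤ lam := div_nonneg (by linarith [ht₀.2]) (by linarith)
    have hlam1 : lam ≤ 1 := by
      rw [div_le_one (by linarith)]
      linarith [ht₁.1]
    have hcomb : lam • f t₁ + (1 - lam) • f t₀ = f t := by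
      have hne : t₁ - t₀ ≠ 0 := sub_ne_zero.mpr (ne_of_gt hlt)
      have hc : lam * t₁ + (1 - lam) * t₀ = t := by
        rw [hlam]; field_simp; ring
      have : lam • f t₁ + (1 - lam) • f t₀ =
          (lam * t₁ + (1 - lam) * t₀) • p + (1 - (lam * t₁ + (1 - lam) * t₀)) • q := by
        simp only [hfdef]; module
      rw [this, hc]
    -- sim (f t₀) (f t₁) through p
    have hsim01 : R (f t₁) (f t₀) ∧ R (f t₀) (f t₁) :=
      ⟨h.trans _ ht₁S p hp _ ht₀S hsim1.1 hsim0.2,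
       h.trans _ ht₀S p hp _ ht₁S hsim0.1 hsim1.2⟩
    have := sim_mix h ht₁S ht₀S hsim01 ⟨hlam0, hlam1⟩
    rw [hcomb] at this
    -- f t ∼ f t₀ ∼ p, so R p (f t): contradiction
    exact hcon (h.trans p hp _ ht₀S _ hftS hsim0.2 this.2)

/-- Betweenness, lower half. -/
lemma between_lower (h : H n ε R) {p q : Fin n → ℝ} (hp : p ∈ S) (hq : q ∈ S)
    (hpq : R p q) {t : ℝ} (ht : t ∈ Icc (0:ℝ) 1) :
    R (t • p + (1 - t) • q) q := by
  classical
  by_contra hcon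
  set f : ℝ → Fin n → ℝ := fun μ => μ • p + (1 - μ) • q with hfdef
  have hfc : Continuous f := by
    apply Continuous.add
    · exact continuous_id.smul continuous_const
    · exact (continuous_const.sub continuous_id).smul continuous_const
  have hf0 : f 0 = q := by simp only [hfdef]; module
  have hf1 : f 1 = p := by simp only [hfdef]; module
  have hfS : ∀ μ ∈ Icc (0:ℝ) 1, f μ ∈ S := fun μ hμ => mix_mem hp hq hμ
  have hftS : f t ∈ S := hfS t ht
  have hstrict : R q (f t) := by
    rcases h.comp (f t) hftS q hq with h1 | h1
    · exact absurd h1 hcon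
    · exact h1
  have hfS1 : ∀ μ ∈ Icc t 1, f μ ∈ S := fun μ hμ => hfS μ ⟨le_trans ht.1 hμ.1, hμ.2⟩
  have hfS0 : ∀ μ ∈ Icc 0 t, f μ ∈ S := fun μ hμ => hfS μ ⟨hμ.1, le_trans hμ.2 ht.2⟩
  obtain ⟨t₁, ht₁, hsim1⟩ := exists_indiff h hfc ht.2 hfS1 hq
    ⟨1, ⟨ht.2, le_refl _⟩, by rw [hf1]; exact hpq⟩ ⟨t, ⟨le_refl _, ht.2⟩, hstrict⟩
  obtain ⟨t₀, ht₀, hsim0⟩ := exists_indiff h hfc ht.1 hfS0 hq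
    ⟨0, ⟨le_refl _, ht.1⟩, by rw [hf0]; exact h.refl hq⟩ ⟨0, ⟨le_refl _, ht.1⟩, by rw [hf0]; exact h.refl hq⟩
  have ht₀S : f t₀ ∈ S := hfS0 t₀ ht₀
  have ht₁S : f t₁ ∈ S := hfS1 t₁ ht₁
  rcases eq_or_lt_of_le (le_trans ht₀.2 ht₁.1 : t₀ ≤ t₁) with heq | hlt
  · have : t₀ = t := le_antisymm ht₀.2 (heq ▸ ht₁.1)
    exact hcon (this ▸ hsim0.1)
  · set lam : ℝ := (t - t₀) / (t₁ - t₀) with hlam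
    have hlam0 : 0 ≤ lam := div_nonneg (by linarith [ht₀.2]) (by linarith)
    have hlam1 : lam ≤ 1 := by
      rw [div_le_one (by linarith)]
      linarith [ht₁.1]
    have hcomb : lam • f t₁ + (1 - lam) • f t₀ = f t := by
      have hne : t₁ - t₀ ≠ 0 := sub_ne_zero.mpr (ne_of_gt hlt)
      have hc : lam * t₁ + (1 - lam) * t₀ = t := by
        rw [hlam]; field_simp; ring
      have : lam • f t₁ + (1 - lam) • f t₀ =
          (lam * t₁ + (1 - lam) * t₀) • p + (1 - (lam * t₁ + (1 - lam) * t₀)) • q := by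
        simp only [hfdef]; module
      rw [this, hc]
    have hsim01 : R (f t₁) (f t₀) ∧ R (f t₀) (f t₁) :=
      ⟨h.trans _ ht₁S q hq _ ht₀S hsim1.1 hsim0.2,
       h.trans _ ht₀S q hq _ ht₁S hsim0.1 hsim1.2⟩
    have := sim_mix h ht₁S ht₀S hsim01 ⟨hlam0, hlam1⟩
    rw [hcomb] at this
    exact hcon (h.trans _ hftS _ ht₀S q hq this.1 hsim0.1)


/-- Among the vertices there is a best one. -/
lemma finset_max (h : H n ε R) {s : Finset (Fin n)} (hs : s.Nonempty) :
    ∃ b ∈ s, ∀ i ∈ s, R (Pi.single b 1) (Pi.single i 1) := by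
  classical
  induction hs using Finset.Nonempty.cons_induction with
  | singleton a =>
    refine ⟨a, Finset.mem_singleton_self a, fun i hi => ?_⟩
    rw [Finset.mem_singleton] at hi
    subst hi
    exact h.refl (single_mem_stdSimplex ℝ _)
  | cons a s ha hs ih =>
    obtain ⟨b, hbs, hbmax⟩ := ih
    have hamem := single_mem_stdSimplex ℝ a
    have hbmem := single_mem_stdSimplex ℝ b
    rcases h.comp _ hamem _ hbmem with h1 | h1
    · refine ⟨a, Finset.mem_cons_self _ _, ?_⟩
      intro i hi
      rcases Finset.mem_cons.mp hi with rfl | his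
      · exact h.refl hamem
      · exact h.trans _ hamem _ hbmem _ (single_mem_stdSimplex ℝ i) h1 (hbmax i his)
    · refine ⟨b, Finset.mem_cons_of_mem hbs, ?_⟩
      intro i hi
      rcases Finset.mem_cons.mp hi with rfl | his
      · exact h1
      · exact hbmax i his

/-- Among the vertices there is a worst one. -/
lemma finset_min (h : H n ε R) {s : Finset (Fin n)} (hs : s.Nonempty) :
    ∃ w ∈ s, ∀ i ∈ s, R (Pi.single i 1) (Pi.single w 1) := by
  classical
  induction hs using Finset.Nonempty.cons_induction with
  | singleton a =>
    refine ⟨a, Finset.mem_singleton_self a, fun i hi => ?_⟩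
    rw [Finset.mem_singleton] at hi
    subst hi
    exact h.refl (single_mem_stdSimplex ℝ _)
  | cons a s ha hs ih =>
    obtain ⟨b, hbs, hbmin⟩ := ih
    have hamem := single_mem_stdSimplex ℝ a
    have hbmem := single_mem_stdSimplex ℝ b
    rcases h.comp _ hamem _ hbmem with h1 | h1
    · refine ⟨b, Finset.mem_cons_of_mem hbs, ?_⟩
      intro i hi
      rcases Finset.mem_cons.mp hi with rfl | his
      · exact h1
      · exact hbmin i his
    · refine ⟨a, Finset.mem_cons_self _ _, ?_⟩
      intro i hi
      rcases Finset.mem_cons.mp hi with rfl | his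
      · exact h.refl hamem
      · exact h.trans _ (single_mem_stdSimplex ℝ i) _ hbmem _ hamem (hbmin i his) h1

lemma range_ite_eq_single (i : Fin n) :
    (fun j : Fin n => if i = j then (1:ℝ) else 0) = Pi.single i 1 := by
  ext j
  rw [Pi.single_apply]
  simp [eq_comm]

/-- A vertex best among vertices is best on the whole simplex. -/
lemma max_on_simplex (h : H n ε R) {b : Fin n}
    (hb : ∀ i : Fin n, R (Pi.single b 1) (Pi.single i 1)) :
    ∀ p ∈ S, R (Pi.single b 1) p := by
  have hbmem := single_mem_stdSimplex ℝ b
  set T : Set (Fin n → ℝ) := {p | p ∈ S ∧ R (Pi.single b 1) p} with hT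
  have hTconv : Convex ℝ T := by
    intro x hx y hy a c ha hc hac
    have hmemS : a • x + c • y ∈ S :=
      convex_stdSimplex ℝ (Fin n) hx.1 hy.1 ha hc hac
    have hc' : c = 1 - a := by linarith
    subst hc'
    refine ⟨hmemS, ?_⟩
    rcases h.comp x hx.1 y hy.1 with h1 | h1
    · have := between_upper h hx.1 hy.1 h1 ⟨ha, by linarith⟩
      exact h.trans _ hbmem x hx.1 _ hmemS hx.2 this
    · have := between_upper h hy.1 hx.1 h1 (t := 1 - a) ⟨by linarith, by linarith⟩
      have hcomm : (1 - a) • y + (1 - (1 - a)) • x = a • x + (1 - a) • y := by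
        module
      rw [hcomm] at this
      exact h.trans _ hbmem y hy.1 _ hmemS hy.2 this
  have hsub : S ⊆ T := by
    rw [← convexHull_basis_eq_stdSimplex]
    apply convexHull_min _ hTconv
    rintro _ ⟨i, rfl⟩
    refine Set.mem_of_eq_of_mem ?_ ⟨single_mem_stdSimplex ℝ i, hb i⟩
    ext j
    rw [Pi.single_apply]
    by_cases hij : i = j
    · subst hij; simp
    · simp [hij, Ne.symm hij]
  exact fun p hp => (hsub hp).2

/-- A vertex worst among vertices is worst on the whole simplex. -/
lemma min_on_simplex (h : H n ε R) {w : Fin n}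
    (hw : ∀ i : Fin n, R (Pi.single i 1) (Pi.single w 1)) :
    ∀ p ∈ S, R p (Pi.single w 1) := by
  have hwmem := single_mem_stdSimplex ℝ w
  set T : Set (Fin n → ℝ) := {p | p ∈ S ∧ R p (Pi.single w 1)} with hT
  have hTconv : Convex ℝ T := by
    intro x hx y hy a c ha hc hac
    have hmemS : a • x + c • y ∈ S :=
      convex_stdSimplex ℝ (Fin n) hx.1 hy.1 ha hc hac
    have hc' : c = 1 - a := by linarith
    subst hc'
    refine ⟨hmemS, ?_⟩
    rcases h.comp x hx.1 y hy.1 with h1 | h1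
    · have := between_lower h hx.1 hy.1 h1 ⟨ha, by linarith⟩
      exact h.trans _ hmemS y hy.1 _ hwmem this hy.2
    · have := between_lower h hy.1 hx.1 h1 (t := 1 - a) ⟨by linarith, by linarith⟩
      have hcomm : (1 - a) • y + (1 - (1 - a)) • x = a • x + (1 - a) • y := by
        module
      rw [hcomm] at this
      exact h.trans _ hmemS x hx.1 _ hwmem this hx.2
  have hsub : S ⊆ T := by
    rw [← convexHull_basis_eq_stdSimplex]
    apply convexHull_min _ hTconv
    rintro _ ⟨i, rfl⟩
    refine Set.mem_of_eq_of_mem ?_ ⟨single_mem_stdSimplex ℝ i, hw i⟩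
    ext j
    rw [Pi.single_apply]
    by_cases hij : i = j
    · subst hij; simp
    · simp [hij, Ne.symm hij]
  exact fun p hp => (hsub hp).2

/-! ### The reference segment -/

/-- The segment from the worst vertex to the best vertex. -/
noncomputable def mseg (b w : Fin n) (t : ℝ) : Fin n → ℝ :=
  t • (Pi.single b 1 : Fin n → ℝ) + (1 - t) • (Pi.single w 1 : Fin n → ℝ)

lemma mseg_cont (b w : Fin n) : Continuous (mseg b w) := by
  apply Continuous.add
  · exact continuous_id.smul continuous_const
  · exact (continuous_const.sub continuous_id).smul continuous_const

lemma mseg_mem (b w : Fin n) {t : ℝ} (ht : t ∈ Icc (0:ℝ) 1) : mseg b w t ∈ S :=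
  mix_mem (single_mem_stdSimplex ℝ b) (single_mem_stdSimplex ℝ w) ht

lemma mseg_zero (b w : Fin n) : mseg b w 0 = Pi.single w 1 := by
  unfold mseg; module

lemma mseg_one (b w : Fin n) : mseg b w 1 = Pi.single b 1 := by
  unfold mseg; module

lemma mseg_comb (b w : Fin n) (s x y : ℝ) :
    s • mseg b w x + (1 - s) • mseg b w y = mseg b w (s * x + (1 - s) * y) := by
  unfold mseg; module

section Seg

variable (b w : Fin n)
variable (hbmax : ∀ p ∈ stdSimplex ℝ (Fin n), R (Pi.single b 1) p)
variable (hwmin : ∀ p ∈ stdSimplex ℝ (Fin n), R p (Pi.single w 1))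

include hbmax hwmin

omit hwmin in
/-- Monotonicity along the reference segment. -/
lemma mseg_mono (h : H n ε R) {s t : ℝ} (hs : 0 ≤ s) (hst : s ≤ t) (ht : t ≤ 1) :
    R (mseg b w t) (mseg b w s) := by
  classical
  by_contra hcon
  have hsI : s ∈ Icc (0:ℝ) 1 := ⟨hs, le_trans hst ht⟩
  have htI : t ∈ Icc (0:ℝ) 1 := ⟨le_trans hs hst, ht⟩
  have hsS : mseg b w s ∈ S := mseg_mem b w hsI
  have htS : mseg b w t ∈ S := mseg_mem b w htI
  rcases eq_or_lt_of_le hst with rfl | hlt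
  · exact hcon (h.refl hsS)
  have hstrict : R (mseg b w s) (mseg b w t) := by
    rcases h.comp _ htS _ hsS with h1 | h1
    · exact absurd h1 hcon
    · exact h1
  have hfS : ∀ μ ∈ Icc t 1, mseg b w μ ∈ S := fun μ hμ =>
    mseg_mem b w ⟨le_trans htI.1 hμ.1, hμ.2⟩
  obtain ⟨μ, hμI, hsimμ⟩ := exists_indiff h (mseg_cont b w) ht hfS hsS
    ⟨1, ⟨ht, le_refl _⟩, by rw [mseg_one]; exact hbmax _ hsS⟩
    ⟨t, ⟨le_refl _, ht⟩, hstrict⟩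
  have hμS : mseg b w μ ∈ S := hfS μ hμI
  -- mseg t is a mixture of mseg s and mseg μ with s < t ≤ μ
  have hsμ : s < μ := lt_of_lt_of_le hlt hμI.1
  set lam : ℝ := (t - s) / (μ - s) with hlam
  have hne : μ - s ≠ 0 := sub_ne_zero.mpr (ne_of_gt hsμ)
  have hlam0 : 0 ≤ lam := div_nonneg (by linarith) (by linarith)
  have hlam1 : lam ≤ 1 := by
    rw [div_le_one (by linarith)]
    linarith [hμI.1]
  have hc : lam * μ + (1 - lam) * s = t := by
    rw [hlam]; field_simp; ring
  have hcomb : lam • mseg b w μ + (1 - lam) • mseg b w s = mseg b w t := by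
    rw [mseg_comb, hc]
  have := sim_mix h hμS hsS ⟨hsimμ.1, hsimμ.2⟩ ⟨hlam0, hlam1⟩
  rw [hcomb] at this
  exact hcon this.1

/-! ### The calibration function τ -/

omit hbmax hwmin in
/-- the "dominated positions" set. -/
def tauSet (p : Fin n → ℝ) : Set ℝ := {x : ℝ | x ∈ Icc (0:ℝ) 1 ∧ R p (mseg b w x)}

omit hbmax hwmin in
lemma tauSet_bddAbove (p : Fin n → ℝ) : BddAbove (tauSet (R := R) b w p) :=
  ⟨1, fun x hx => hx.1.2⟩

omit hbmax hwmin in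
lemma tauSet_closed (h : H n ε R) {p : Fin n → ℝ} (hp : p ∈ S) :
    IsClosed (tauSet (R := R) b w p) := by
  have : tauSet (R := R) b w p = Icc (0:ℝ) 1 ∩ mseg b w ⁻¹' {q | q ∈ S ∧ R p q} := by
    ext x
    constructor
    · rintro ⟨hx, hr⟩; exact ⟨hx, mseg_mem b w hx, hr⟩
    · rintro ⟨hx, _, hr⟩; exact ⟨hx, hr⟩
  rw [this]
  exact isClosed_Icc.inter ((h.cont p hp).2.preimage (mseg_cont b w))

omit hbmax in
lemma tauSet_nonempty (h : H n ε R) {p : Fin n → ℝ} (hp : p ∈ S) :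
    (tauSet (R := R) b w p).Nonempty := by
  refine ⟨0, ⟨le_refl _, zero_le_one⟩, ?_⟩
  rw [mseg_zero]
  exact hwmin p hp

/-- the calibration value. -/
noncomputable def tau (p : Fin n → ℝ) : ℝ := sSup (tauSet (R := R) b w p)

omit hbmax in
lemma tau_mem (h : H n ε R) {p : Fin n → ℝ} (hp : p ∈ S) :
    tau (R := R) b w p ∈ tauSet (R := R) b w p :=
  (tauSet_closed b w h hp).csSup_mem (tauSet_nonempty b w hwmin h hp) (tauSet_bddAbove b w p)

omit hbmax in
lemma tau_Icc (h : H n ε R) {p : Fin n → ℝ} (hp : p ∈ S) :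
    tau (R := R) b w p ∈ Icc (0:ℝ) 1 := (tau_mem b w hwmin h hp).1

omit hbmax in
lemma tau_R (h : H n ε R) {p : Fin n → ℝ} (hp : p ∈ S) :
    R p (mseg b w (tau (R := R) b w p)) := (tau_mem b w hwmin h hp).2

/-- Calibration: `p ∼ mseg (τ p)`. -/
lemma tau_calib (h : H n ε R) {p : Fin n → ℝ} (hp : p ∈ S) :
    R (mseg b w (tau (R := R) b w p)) p := by
  classical
  set τ := tau (R := R) b w p with hτ
  have hmem := tau_mem b w hwmin h hp
  have hIcc : τ ∈ Icc (0:ℝ) 1 := hmem.1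
  rcases eq_or_lt_of_le hIcc.2 with h1 | hlt1
  · rw [h1, mseg_one]
    exact hbmax p hp
  · set D : Set ℝ := {x | x ∈ Icc τ 1 ∧ R (mseg b w x) p} with hD
    have hDc : IsClosed D := by
      have : D = Icc τ 1 ∩ mseg b w ⁻¹' {q | q ∈ S ∧ R q p} := by
        ext x
        constructor
        · rintro ⟨hx, hr⟩
          exact ⟨hx, mseg_mem b w ⟨le_trans hIcc.1 hx.1, hx.2⟩, hr⟩
        · rintro ⟨hx, _, hr⟩; exact ⟨hx, hr⟩
      rw [this]
      exact isClosed_Icc.inter ((h.cont p hp).1.preimage (mseg_cont b w))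
    have hIoc : Ioc τ 1 ⊆ D := by
      intro x hx
      have hxI : x ∈ Icc (0:ℝ) 1 := ⟨le_trans hIcc.1 (le_of_lt hx.1), hx.2⟩
      have hnot : x ∉ tauSet (R := R) b w p := by
        intro hmem'
        exact absurd (le_csSup (tauSet_bddAbove b w p) hmem') (not_le.mpr hx.1)
      have : ¬ R p (mseg b w x) := fun hr => hnot ⟨hxI, hr⟩
      rcases h.comp _ (mseg_mem b w hxI) p hp with h2 | h2
      · exact ⟨⟨le_of_lt hx.1, hx.2⟩, h2⟩
      · exact absurd h2 this
    have : τ ∈ D := by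
      have hclo : closure (Ioc τ 1) ⊆ D := closure_minimal hIoc hDc
      rw [closure_Ioc (ne_of_lt hlt1)] at hclo
      exact hclo (left_mem_Icc.mpr (le_of_lt hlt1))
    exact this.2

/-- τ represents the preference. -/
lemma tau_rep (h : H n ε R) {p q : Fin n → ℝ} (hp : p ∈ S) (hq : q ∈ S) :
    R p q ↔ tau (R := R) b w q ≤ tau (R := R) b w p := by
  constructor
  · intro hr
    apply csSup_le_csSup (tauSet_bddAbove b w p) (tauSet_nonempty b w hwmin h hq)
    rintro x ⟨hx, hrx⟩
    exact ⟨hx, h.trans p hp q hq _ (mseg_mem b w hx) hr hrx⟩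
  · intro hle
    have h1 : R p (mseg b w (tau (R := R) b w p)) := tau_R b w hwmin h hp
    have h2 : R (mseg b w (tau (R := R) b w p)) (mseg b w (tau (R := R) b w q)) :=
      mseg_mono b w hbmax h (tau_Icc b w hwmin h hq).1 hle (tau_Icc b w hwmin h hp).2
    have h3 : R (mseg b w (tau (R := R) b w q)) q := tau_calib b w hbmax hwmin h hq
    have hm1 : mseg b w (tau (R := R) b w p) ∈ S := mseg_mem b w (tau_Icc b w hwmin h hp)
    have hm2 : mseg b w (tau (R := R) b w q) ∈ S := mseg_mem b w (tau_Icc b w hwmin h hq)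
    exact h.trans p hp _ hm1 q hq h1 (h.trans _ hm1 _ hm2 q hq h2 h3)

/-- With `ε < 1`, indifference classes along the reference segment are singletons. -/
lemma classes_singleton (h : H n ε R) (hε0 : 0 < ε) (hε1 : ε < 1) {a t : ℝ}
    (ha : 0 ≤ a) (hat : a < t) (ht : t ≤ 1)
    (hsim : R (mseg b w a) (mseg b w t) ∧ R (mseg b w t) (mseg b w a)) : False := by
  classical
  have htI : t ∈ Icc (0:ℝ) 1 := ⟨le_trans ha hat.le, ht⟩
  have haI : a ∈ Icc (0:ℝ) 1 := ⟨ha, le_trans hat.le ht⟩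
  have hmt : mseg b w t ∈ S := mseg_mem b w htI
  set C : Set ℝ := {x | x ∈ Icc (0:ℝ) 1 ∧
      (R (mseg b w x) (mseg b w t) ∧ R (mseg b w t) (mseg b w x))} with hC
  have hCc : IsClosed C := by
    have : C = (Icc (0:ℝ) 1 ∩ mseg b w ⁻¹' {q | q ∈ S ∧ R q (mseg b w t)}) ∩
        (Icc (0:ℝ) 1 ∩ mseg b w ⁻¹' {q | q ∈ S ∧ R (mseg b w t) q}) := by
      ext x
      constructor
      · rintro ⟨hx, h1, h2⟩
        exact ⟨⟨hx, mseg_mem b w hx, h1⟩, ⟨hx, mseg_mem b w hx, h2⟩⟩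
      · rintro ⟨⟨hx, _, h1⟩, ⟨_, _, h2⟩⟩
        exact ⟨hx, h1, h2⟩
    rw [this]
    exact (isClosed_Icc.inter ((h.cont _ hmt).1.preimage (mseg_cont b w))).inter
      (isClosed_Icc.inter ((h.cont _ hmt).2.preimage (mseg_cont b w)))
  have hbdd : BddBelow C := ⟨0, fun x hx => hx.1.1⟩
  have hbddA : BddAbove C := ⟨1, fun x hx => hx.1.2⟩
  have htC : t ∈ C := ⟨htI, h.refl hmt, h.refl hmt⟩
  have haC : a ∈ C := ⟨haI, hsim⟩
  have hCne : C.Nonempty := ⟨t, htC⟩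
  set A := sInf C with hA
  set B := sSup C with hB
  have hAC : A ∈ C := hCc.csInf_mem hCne hbdd
  have hBC : B ∈ C := hCc.csSup_mem hCne hbddA
  have hAa : A ≤ a := csInf_le hbdd haC
  have htB : t ≤ B := le_csSup hbddA htC
  have hAB : A < B := lt_of_le_of_lt hAa (lt_of_lt_of_le hat htB)
  have hAI : A ∈ Icc (0:ℝ) 1 := hAC.1
  have hBI : B ∈ Icc (0:ℝ) 1 := hBC.1
  have hmA : mseg b w A ∈ S := mseg_mem b w hAI
  have hmB : mseg b w B ∈ S := mseg_mem b w hBI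
  set lam := B - A with hlamdef
  have hlam : 0 < lam := by simp only [hlamdef]; linarith
  have hsimAB : R (mseg b w A) (mseg b w B) ∧ R (mseg b w B) (mseg b w A) :=
    ⟨h.trans _ hmA _ hmt _ hmB hAC.2.1 hBC.2.2,
     h.trans _ hmB _ hmt _ hmA hBC.2.1 hAC.2.2⟩
  by_cases hA0 : 0 < A
  · -- direct case : extend the class below its infimum
    set η := min A (lam * (1 - ε) / (2 * ε)) with hη
    have hη0 : 0 < η :=
      lt_min hA0 (div_pos (mul_pos hlam (by linarith)) (by linarith))
    have hηA : η ≤ A := min_le_left _ _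
    have hη2 : η * (2 * ε) ≤ lam * (1 - ε) :=
      (le_div_iff₀ (by linarith)).mp (min_le_right _ _)
    set s' := A - η with hs'
    have hs'0 : 0 ≤ s' := by simp only [hs']; linarith
    have hs'I : s' ∈ Icc (0:ℝ) 1 := ⟨hs'0, by simp only [hs']; linarith [hAI.2]⟩
    have hms' : mseg b w s' ∈ S := mseg_mem b w hs'I
    set θ := η / (lam + η) with hθ
    have hθ0 : 0 ≤ θ := div_nonneg hη0.le (by linarith)
    have hθη : θ * (lam + η) = η := by
      rw [hθ]; field_simp
    have hθlt : θ < 1 - ε := by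
      rw [hθ, div_lt_iff₀ (by linarith)]
      nlinarith
    set α := (1 + ε + θ) / 2 with hα
    have hα1 : α < 1 := by rw [hα]; linarith
    have hα0 : 0 ≤ α := by rw [hα]; linarith
    have hαε : θ < α - ε := by rw [hα]; linarith
    obtain ⟨α', hα'I, hltabs, h1, h2⟩ :=
      h.indep (mseg b w A) hmA (mseg b w B) hmB hsimAB α ⟨hα0, hα1.le⟩ (mseg b w s') hms'
    rw [mseg_comb, mseg_comb] at h1 h2
    set z := α * A + (1 - α) * s' with hz
    set w' := α' * B + (1 - α') * s' with hw'
    have hα'gt : α - ε < α' := by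
      have := abs_lt.mp hltabs; linarith [this.1]
    have hzA : z < A := by
      simp only [hz, hs']; nlinarith
    have hz0 : 0 ≤ z := by
      have := mul_nonneg hα0 hAI.1
      have := mul_nonneg (by linarith : (0:ℝ) ≤ 1 - α) hs'0
      simp only [hz]; linarith
    have hzI : z ∈ Icc (0:ℝ) 1 := ⟨hz0, by linarith [hAI.2]⟩
    have hw'A : A < w' := by
      have hBs' : B = s' + (lam + η) := by simp only [hs', hlamdef]; ring
      have hcalc : w' = s' + α' * (lam + η) := by
        simp only [hw', hBs']; ring
      rw [hcalc]
      have h3 : θ * (lam + η) < α' * (lam + η) :=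
        mul_lt_mul_of_pos_right (lt_trans hαε hα'gt) (by linarith)
      rw [hθη] at h3
      simp only [hs']; linarith
    have hw'I : w' ∈ Icc (0:ℝ) 1 := by
      constructor
      · have := mul_nonneg hα'I.1 hBI.1
        have := mul_nonneg (by linarith [hα'I.2] : (0:ℝ) ≤ 1 - α') hs'0
        simp only [hw']; linarith
      · have h4 : α' * B ≤ α' * 1 := mul_le_mul_of_nonneg_left hBI.2 hα'I.1
        have h5 : (1 - α') * s' ≤ (1 - α') * 1 :=
          mul_le_mul_of_nonneg_left hs'I.2 (by linarith [hα'I.2])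
        simp only [hw']; linarith
    have hmz : mseg b w z ∈ S := mseg_mem b w hzI
    have hmw' : mseg b w w' ∈ S := mseg_mem b w hw'I
    -- A is between z and w'
    set μ := (w' - A) / (w' - z) with hμ
    have hwz : z < w' := lt_trans hzA hw'A
    have hne : w' - z ≠ 0 := sub_ne_zero.mpr (ne_of_gt hwz)
    have hμI : μ ∈ Icc (0:ℝ) 1 := by
      constructor
      · exact div_nonneg (by linarith) (by linarith)
      · rw [div_le_one (by linarith)]; linarith
    have hcombA : μ * z + (1 - μ) * w' = A := by
      rw [hμ]; field_simp; ring
    have hthis := sim_mix h hmz hmw' ⟨h1, h2⟩ hμI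
    rw [mseg_comb, hcombA] at hthis
    -- chain : z ∼ w' ∼ A ∼ t
    have hz_t : R (mseg b w z) (mseg b w t) :=
      h.trans _ hmz _ hmw' _ hmt h1
        (h.trans _ hmw' _ hmA _ hmt hthis.2 hAC.2.1)
    have ht_z : R (mseg b w t) (mseg b w z) :=
      h.trans _ hmt _ hmA _ hmz hAC.2.2
        (h.trans _ hmA _ hmw' _ hmz hthis.1 h2)
    have hzC : z ∈ C := ⟨hzI, hz_t, ht_z⟩
    exact absurd (csInf_le hbdd hzC) (not_le.mpr hzA)
  · have hA0' : A = 0 := le_antisymm (not_lt.mp hA0) hAI.1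
    by_cases hB1 : B < 1
    · -- mirrored case : extend the class above its supremum
      set η := min (1 - B) (lam * (1 - ε) / (2 * ε)) with hη
      have hη0 : 0 < η :=
        lt_min (by linarith) (div_pos (mul_pos hlam (by linarith)) (by linarith))
      have hηB : η ≤ 1 - B := min_le_left _ _
      have hη2 : η * (2 * ε) ≤ lam * (1 - ε) :=
        (le_div_iff₀ (by linarith)).mp (min_le_right _ _)
      set s' := B + η with hs'
      have hs'I : s' ∈ Icc (0:ℝ) 1 :=
        ⟨by simp only [hs']; linarith [hBI.1], by simp only [hs']; linarith⟩
      have hms' : mseg b w s' ∈ S := mseg_mem b w hs'I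
      set θ := η / (lam + η) with hθ
      have hθ0 : 0 ≤ θ := div_nonneg hη0.le (by linarith)
      have hθη : θ * (lam + η) = η := by
        rw [hθ]; field_simp
      have hθlt : θ < 1 - ε := by
        rw [hθ, div_lt_iff₀ (by linarith)]
        nlinarith
      set α := (1 + ε + θ) / 2 with hα
      have hα1 : α < 1 := by rw [hα]; linarith
      have hα0 : 0 ≤ α := by rw [hα]; linarith
      have hαε : θ < α - ε := by rw [hα]; linarith
      obtain ⟨α', hα'I, hltabs, h1, h2⟩ :=
        h.indep (mseg b w B) hmB (mseg b w A) hmA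
          ⟨hsimAB.2, hsimAB.1⟩ α ⟨hα0, hα1.le⟩ (mseg b w s') hms'
      rw [mseg_comb, mseg_comb] at h1 h2
      set z := α * B + (1 - α) * s' with hz
      set w' := α' * A + (1 - α') * s' with hw'
      have hα'gt : α - ε < α' := by
        have := abs_lt.mp hltabs; linarith [this.1]
      have hzB : B < z := by
        have hkey : z = B + (1 - α) * η := by simp only [hz, hs']; ring
        rw [hkey]
        nlinarith [mul_pos (show (0:ℝ) < 1 - α by linarith) hη0]
      have hz1 : z ≤ 1 := by
        have h4 : α * B ≤ α * s' := mul_le_mul_of_nonneg_left (by simp only [hs']; linarith) hα0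
        have hsum : α * s' + (1 - α) * s' = s' := by ring
        have h5 : z ≤ s' := by simp only [hz]; linarith
        linarith [hs'I.2]
      have hzI : z ∈ Icc (0:ℝ) 1 := ⟨by linarith [hBI.1], hz1⟩
      have hw'B : w' < B := by
        have hs'A : s' = A + (lam + η) := by simp only [hs', hlamdef]; ring
        have hcalc : w' = s' - α' * (lam + η) := by
          simp only [hw', hs'A]; ring
        rw [hcalc]
        have h3 : θ * (lam + η) < α' * (lam + η) :=
          mul_lt_mul_of_pos_right (lt_trans hαε hα'gt) (by linarith)
        rw [hθη] at h3
        simp only [hs']; linarith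
      have hw'I : w' ∈ Icc (0:ℝ) 1 := by
        constructor
        · have := mul_nonneg hα'I.1 hAI.1
          have := mul_nonneg (by linarith [hα'I.2] : (0:ℝ) ≤ 1 - α') hs'I.1
          simp only [hw']; linarith
        · have h4 : α' * A ≤ α' * 1 := mul_le_mul_of_nonneg_left hAI.2 hα'I.1
          have h5 : (1 - α') * s' ≤ (1 - α') * 1 :=
            mul_le_mul_of_nonneg_left hs'I.2 (by linarith [hα'I.2])
          simp only [hw']; linarith
      have hmz : mseg b w z ∈ S := mseg_mem b w hzI
      have hmw' : mseg b w w' ∈ S := mseg_mem b w hw'I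
      -- B is between w' and z
      set μ := (z - B) / (z - w') with hμ
      have hwz : w' < z := lt_trans hw'B hzB
      have hne : z - w' ≠ 0 := sub_ne_zero.mpr (ne_of_gt hwz)
      have hμI : μ ∈ Icc (0:ℝ) 1 := by
        constructor
        · exact div_nonneg (by linarith) (by linarith)
        · rw [div_le_one (by linarith)]; linarith
      have hcombB : μ * w' + (1 - μ) * z = B := by
        rw [hμ]; field_simp; ring
      have hthis := sim_mix h hmw' hmz ⟨h2, h1⟩ hμI
      rw [mseg_comb, hcombB] at hthis
      -- chain : z ∼ B ∼ t
      have hz_t : R (mseg b w z) (mseg b w t) :=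
        h.trans _ hmz _ hmB _ hmt hthis.2 hBC.2.1
      have ht_z : R (mseg b w t) (mseg b w z) :=
        h.trans _ hmt _ hmB _ hmz hBC.2.2 hthis.1
      have hzC : z ∈ C := ⟨hzI, hz_t, ht_z⟩
      exact absurd (le_csSup hbddA hzC) (not_le.mpr hzB)
    · -- A = 0, B = 1 : everything is indifferent, contradicting nontriviality
      have hB1' : B = 1 := le_antisymm hBI.2 (not_lt.mp hB1)
      obtain ⟨p, hp, q, hq, hRpq, hnRqp⟩ := h.nontriv
      have h01 : R (mseg b w 0) (mseg b w 1) := by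
        rw [← hA0', ← hB1']
        exact hsimAB.1
      rw [mseg_zero, mseg_one] at h01
      have hwmem := single_mem_stdSimplex ℝ (i := w)
      have hbmem := single_mem_stdSimplex ℝ (i := b)
      have hqw : R q (Pi.single w 1) := hwmin q hq
      have hwb : R (Pi.single w 1) (Pi.single b 1) := h01
      have hbp : R (Pi.single b 1) p := hbmax p hp
      exact hnRqp (h.trans q hq _ hwmem p hp hqw
        (h.trans _ hwmem _ hbmem p hp hwb hbp))

/-- With `ε < 1`, τ is the identity along the reference segment. -/
lemma tau_mseg (h : H n ε R) (hε0 : 0 < ε) (hε1 : ε < 1) {x : ℝ} (hx : x ∈ Icc (0:ℝ) 1) :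
    tau (R := R) b w (mseg b w x) = x := by
  have hmx : mseg b w x ∈ S := mseg_mem b w hx
  have h1 : R (mseg b w x) (mseg b w (tau (R := R) b w (mseg b w x))) :=
    tau_R b w hwmin h hmx
  have h2 : R (mseg b w (tau (R := R) b w (mseg b w x))) (mseg b w x) :=
    tau_calib b w hbmax hwmin h hmx
  have hτI : tau (R := R) b w (mseg b w x) ∈ Icc (0:ℝ) 1 := tau_Icc b w hwmin h hmx
  rcases lt_trichotomy (tau (R := R) b w (mseg b w x)) x with hlt | heq | hlt
  · exact absurd ⟨h2, h1⟩ (fun hs => classes_singleton b w hbmax hwmin h hε0 hε1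
      hτI.1 hlt hx.2 hs)
  · exact heq
  · exact absurd ⟨h1, h2⟩ (fun hs => classes_singleton b w hbmax hwmin h hε0 hε1
      hx.1 hlt hτI.2 hs)

/-- The key mixture estimate. -/
lemma mix_est (h : H n ε R) (hε0 : 0 < ε) (hε1 : ε < 1) {p q : Fin n → ℝ}
    (hp : p ∈ S) (hq : q ∈ S) {t : ℝ} (ht : t ∈ Icc (0:ℝ) 1) :
    |tau (R := R) b w (t • p + (1 - t) • q) -
      (t * tau (R := R) b w p + (1 - t) * tau (R := R) b w q)| ≤ 2 * ε := by
  set P := tau (R := R) b w p with hP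
  set Q := tau (R := R) b w q with hQ
  have hPI : P ∈ Icc (0:ℝ) 1 := tau_Icc b w hwmin h hp
  have hQI : Q ∈ Icc (0:ℝ) 1 := tau_Icc b w hwmin h hq
  have hmP : mseg b w P ∈ S := mseg_mem b w hPI
  have hmQ : mseg b w Q ∈ S := mseg_mem b w hQI
  have hsimp : R p (mseg b w P) ∧ R (mseg b w P) p :=
    ⟨tau_R b w hwmin h hp, tau_calib b w hbmax hwmin h hp⟩
  obtain ⟨t₁, ht₁I, habs1, g1, g2⟩ := h.indep p hp (mseg b w P) hmP hsimp t ht q hq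
  have hsimq : R q (mseg b w Q) ∧ R (mseg b w Q) q :=
    ⟨tau_R b w hwmin h hq, tau_calib b w hbmax hwmin h hq⟩
  have h1t₁ : (1 - t₁) ∈ Icc (0:ℝ) 1 := ⟨by linarith [ht₁I.2], by linarith [ht₁I.1]⟩
  obtain ⟨s, hsI, habs2, g3, g4⟩ :=
    h.indep q hq (mseg b w Q) hmQ hsimq (1 - t₁) h1t₁ (mseg b w P) hmP
  have hre : (1 - t₁) • q + (1 - (1 - t₁)) • (mseg b w P)
      = t₁ • mseg b w P + (1 - t₁) • q := by module
  rw [hre, mseg_comb] at g3 g4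
  set x := s * Q + (1 - s) * P with hx
  have hxI : x ∈ Icc (0:ℝ) 1 := by
    constructor
    · have := mul_nonneg hsI.1 hQI.1
      have := mul_nonneg (by linarith [hsI.2] : (0:ℝ) ≤ 1 - s) hPI.1
      simp only [hx]; linarith
    · have h4 : s * Q ≤ s * 1 := mul_le_mul_of_nonneg_left hQI.2 hsI.1
      have h5 : (1 - s) * P ≤ (1 - s) * 1 :=
        mul_le_mul_of_nonneg_left hPI.2 (by linarith [hsI.2])
      simp only [hx]; linarith
  have hmix : t • p + (1 - t) • q ∈ S := mix_mem hp hq ht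
  have hmid : t₁ • mseg b w P + (1 - t₁) • q ∈ S := mix_mem hmP hq ht₁I
  have hmx : mseg b w x ∈ S := mseg_mem b w hxI
  have hs1 : R (t • p + (1 - t) • q) (mseg b w x) := h.trans _ hmix _ hmid _ hmx g1 g3
  have hs2 : R (mseg b w x) (t • p + (1 - t) • q) := h.trans _ hmx _ hmid _ hmix g4 g2
  have htaux : tau (R := R) b w (t • p + (1 - t) • q) = x := by
    have e1 : tau (R := R) b w (mseg b w x) ≤ tau (R := R) b w (t • p + (1 - t) • q) :=
      (tau_rep b w hbmax hwmin h hmix hmx).mp hs1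
    have e2 : tau (R := R) b w (t • p + (1 - t) • q) ≤ tau (R := R) b w (mseg b w x) :=
      (tau_rep b w hbmax hwmin h hmx hmix).mp hs2
    have e3 := tau_mseg b w hbmax hwmin h hε0 hε1 hxI
    linarith [e1, e2, e3.le, e3.ge]
  have hd : x - (t * P + (1 - t) * Q) = (s - (1 - t)) * (Q - P) := by
    rw [hx]; ring
  have habs : |s - (1 - t)| ≤ 2 * ε := by
    have hsplit : s - (1 - t) = -((1 - t₁) - s) + (t - t₁) := by ring
    calc |s - (1 - t)| = |(-((1 - t₁) - s)) + (t - t₁)| := by rw [hsplit]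
      _ ≤ |(-((1 - t₁) - s))| + |t - t₁| := abs_add_le _ _
      _ = |(1 - t₁) - s| + |t - t₁| := by rw [abs_neg]
      _ ≤ ε + ε := add_le_add habs2.le habs1.le
      _ = 2 * ε := by ring
  have hQP : |Q - P| ≤ 1 := by
    rw [abs_le]
    constructor <;> [linarith [hQI.1, hPI.2]; linarith [hQI.2, hPI.1]]
  rw [htaux]
  calc |x - (t * P + (1 - t) * Q)| = |s - (1 - t)| * |Q - P| := by rw [hd, abs_mul]
    _ ≤ (2 * ε) * 1 := mul_le_mul habs hQP (abs_nonneg _) (by linarith)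
    _ = 2 * ε := by ring

omit hbmax hwmin in
lemma sum_single_mul (c : Fin n → ℝ) (j : Fin n) :
    ∑ i, (Pi.single j 1 : Fin n → ℝ) i * c i = c j := by
  rw [Finset.sum_eq_single j]
  · rw [Pi.single_eq_same, one_mul]
  · intro i _ hij
    rw [Pi.single_eq_of_ne hij, zero_mul]
  · intro hj'
    exact absurd (Finset.mem_univ j) hj'

/-- Peeling induction : τ is approximately affine on the simplex. -/
lemma peel (h : H n ε R) (hε0 : 0 < ε) (hε1 : ε < 1) :
    ∀ (k : ℕ) (s : Finset (Fin n)), s.card = k → ∀ (p : Fin n → ℝ),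
      p ∈ S → (∀ i ∉ s, p i = 0) →
      |tau (R := R) b w p - ∑ i ∈ s, p i * tau (R := R) b w (Pi.single i 1)| ≤
        2 * ε * ((k : ℝ) - 1) := by
  intro k
  induction k with
  | zero =>
    intro s hcard p hp hsupp
    exfalso
    rw [Finset.card_eq_zero] at hcard
    subst hcard
    have h0 : ∑ i, p i = 0 :=
      Finset.sum_eq_zero (fun i _ => hsupp i (Finset.notMem_empty i))
    rw [hp.2] at h0
    norm_num at h0
  | succ k ih =>
    intro s hcard p hp hsupp
    have hsne : s.Nonempty := Finset.card_pos.mp (by omega)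
    obtain ⟨j, hj⟩ := hsne
    set t := p j with htdef
    have ht0 : 0 ≤ t := hp.1 j
    have hsum : ∑ i, p i = 1 := hp.2
    have ht1 : t ≤ 1 := by
      rw [← hsum]
      exact Finset.single_le_sum (fun i _ => hp.1 i) (Finset.mem_univ j)
    rcases eq_or_lt_of_le ht1 with heq | hlt
    · -- p is the degenerate lottery at j
      have hsplit : ∑ i, p i = p j + ∑ i ∈ Finset.univ.erase j, p i :=
        (Finset.add_sum_erase _ _ (Finset.mem_univ j)).symm
      have hrest : ∑ i ∈ Finset.univ.erase j, p i = 0 := by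
        rw [hsplit] at hsum
        linarith [heq]
      have hzero : ∀ i ∈ Finset.univ.erase j, p i = 0 :=
        (Finset.sum_eq_zero_iff_of_nonneg (fun i _ => hp.1 i)).mp hrest
      have hpj : p = Pi.single j 1 := by
        funext i
        by_cases hij : i = j
        · subst hij; rw [Pi.single_eq_same, ← htdef]; exact heq
        · rw [Pi.single_eq_of_ne hij]
          exact hzero i (Finset.mem_erase.mpr ⟨hij, Finset.mem_univ i⟩)
      rw [hpj]
      have hsum2 : ∑ i ∈ s, (Pi.single j 1 : Fin n → ℝ) i * tau (R := R) b w (Pi.single i 1)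
          = tau (R := R) b w (Pi.single j 1) := by
        rw [Finset.sum_eq_single j]
        · rw [Pi.single_eq_same, one_mul]
        · intro i _ hij
          rw [Pi.single_eq_of_ne hij, zero_mul]
        · intro hj'
          exact absurd hj hj'
      rw [hsum2, sub_self, abs_zero]
      have hk : ((k + 1 : ℕ) : ℝ) - 1 = (k : ℝ) := by push_cast; ring
      rw [hk]
      positivity
    · -- split off the j-th coordinate
      have h1t : (0:ℝ) < 1 - t := by linarith
      set q : Fin n → ℝ := (1 - t)⁻¹ • (p - t • (Pi.single j 1 : Fin n → ℝ)) with hqdef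
      have hqapp : ∀ i, q i = (1 - t)⁻¹ * (p i - t * (Pi.single j 1 : Fin n → ℝ) i) := by
        intro i
        simp [hqdef, Pi.smul_apply, Pi.sub_apply, smul_eq_mul]
      have hqj : q j = 0 := by
        rw [hqapp j, Pi.single_eq_same, ← htdef]
        ring
      have hqi : ∀ i, i ≠ j → q i = (1 - t)⁻¹ * p i := by
        intro i hij
        rw [hqapp i, Pi.single_eq_of_ne hij]
        ring
      have hq0 : ∀ i, 0 ≤ q i := by
        intro i
        by_cases hij : i = j
        · subst hij; rw [hqj]
        · rw [hqi i hij]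
          exact mul_nonneg (by positivity) (hp.1 i)
      have hqsum : ∑ i, q i = 1 := by
        have e1 : ∑ i, q i = (1 - t)⁻¹ * ∑ i, (p i - t * (Pi.single j 1 : Fin n → ℝ) i) := by
          rw [Finset.mul_sum]
          exact Finset.sum_congr rfl (fun i _ => hqapp i)
        have esingle : ∑ i, (Pi.single j 1 : Fin n → ℝ) i = 1 := (single_mem_stdSimplex ℝ j).2
        have e2 : ∑ i, (p i - t * (Pi.single j 1 : Fin n → ℝ) i) = 1 - t := by
          rw [Finset.sum_sub_distrib, ← Finset.mul_sum, hsum, esingle]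
          ring
        rw [e1, e2]
        field_simp
      have hqS : q ∈ S := ⟨hq0, hqsum⟩
      have hqsupp : ∀ i ∉ s.erase j, q i = 0 := by
        intro i hi
        by_cases hij : i = j
        · subst hij; exact hqj
        · have hnotin : i ∉ s := fun his => hi (Finset.mem_erase.mpr ⟨hij, his⟩)
          rw [hqi i hij, hsupp i hnotin, mul_zero]
      have hcard' : (s.erase j).card = k := by
        rw [Finset.card_erase_of_mem hj, hcard]
        omega
      have hdecomp : p = t • (Pi.single j 1 : Fin n → ℝ) + (1 - t) • q := by
        rw [hqdef, smul_inv_smul₀ (ne_of_gt h1t)]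
        abel
      have hmixest := mix_est b w hbmax hwmin h hε0 hε1
        (single_mem_stdSimplex ℝ j) hqS (t := t) ⟨ht0, ht1⟩
      rw [← hdecomp] at hmixest
      have hih := ih (s.erase j) hcard' q hqS hqsupp
      have hsum_split : ∑ i ∈ s, p i * tau (R := R) b w (Pi.single i 1)
          = t * tau (R := R) b w (Pi.single j 1)
            + (1 - t) * ∑ i ∈ s.erase j, q i * tau (R := R) b w (Pi.single i 1) := by
        rw [Finset.mul_sum, ← Finset.add_sum_erase _ _ hj]
        congr 1
        apply Finset.sum_congr rfl
        intro i hi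
        have hij : i ≠ j := (Finset.mem_erase.mp hi).1
        rw [hqi i hij]
        field_simp
      have hident : tau (R := R) b w p - ∑ i ∈ s, p i * tau (R := R) b w (Pi.single i 1)
          = (tau (R := R) b w p - (t * tau (R := R) b w (Pi.single j 1)
              + (1 - t) * tau (R := R) b w q))
            + (1 - t) * (tau (R := R) b w q
              - ∑ i ∈ s.erase j, q i * tau (R := R) b w (Pi.single i 1)) := by
        rw [hsum_split]; ring
      rw [hident]
      have hnn : (0:ℝ) ≤ 2 * ε * ((k : ℝ) - 1) := le_trans (abs_nonneg _) hih
      calc |_ + _| ≤ |tau (R := R) b w p - (t * tau (R := R) b w (Pi.single j 1)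
              + (1 - t) * tau (R := R) b w q)|
            + |(1 - t) * (tau (R := R) b w q
              - ∑ i ∈ s.erase j, q i * tau (R := R) b w (Pi.single i 1))| := abs_add_le _ _
        _ ≤ 2 * ε + (1 - t) * (2 * ε * ((k : ℝ) - 1)) := by
            apply add_le_add hmixest
            rw [abs_mul, abs_of_nonneg (le_of_lt h1t)]
            exact mul_le_mul_of_nonneg_left hih (le_of_lt h1t)
        _ ≤ 2 * ε * (((k + 1 : ℕ) : ℝ) - 1) := by
            push_cast
            nlinarith [mul_nonneg ht0 hnn]

end Seg

/-- Main construction in the regime `ε < 1`. -/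
lemma main_lt1 (h : H n ε R) (hε0 : 0 < ε) (hε1 : ε < 1) :
    ∃ u ℓ : (Fin n → ℝ) → ℝ,
      (∀ p ∈ S, ∀ q ∈ S, (R p q ↔ u q ≤ u p)) ∧
      u '' S = Icc 0 1 ∧ ℓ '' S = Icc 0 1 ∧
      (∀ i, u (Pi.single i 1) = ℓ (Pi.single i 1)) ∧
      (∀ p ∈ S, ∀ q ∈ S, ∀ t ∈ Icc (0:ℝ) 1,
        ℓ (t • p + (1 - t) • q) = t * ℓ p + (1 - t) * ℓ q) ∧
      (∀ p ∈ S, |u p - ℓ p| ≤ 2 * ε * ((n : ℝ) - 1)) := by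
  classical
  obtain ⟨p₀, hp₀, _⟩ := h.nontriv
  have hn0 : n ≠ 0 := by
    rintro rfl
    have := hp₀.2
    simp at this
  haveI : Nonempty (Fin n) := ⟨⟨0, Nat.pos_of_ne_zero hn0⟩⟩
  obtain ⟨b, _, hb'⟩ := finset_max h (s := Finset.univ) Finset.univ_nonempty
  obtain ⟨w, _, hw'⟩ := finset_min h (s := Finset.univ) Finset.univ_nonempty
  have hb : ∀ i : Fin n, R (Pi.single b 1) (Pi.single i 1) :=
    fun i => hb' i (Finset.mem_univ i)
  have hw : ∀ i : Fin n, R (Pi.single i 1) (Pi.single w 1) :=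
    fun i => hw' i (Finset.mem_univ i)
  have hbmax := max_on_simplex h hb
  have hwmin := min_on_simplex h hw
  set u : (Fin n → ℝ) → ℝ := tau (R := R) b w with hu
  set l : (Fin n → ℝ) → ℝ := fun p => ∑ i, p i * u (Pi.single i 1) with hl
  have hub : u (Pi.single b 1) = 1 := by
    rw [hu, ← mseg_one b w]
    exact tau_mseg b w hbmax hwmin h hε0 hε1 ⟨zero_le_one, le_refl 1⟩
  have huw : u (Pi.single w 1) = 0 := by
    rw [hu, ← mseg_zero b w]
    exact tau_mseg b w hbmax hwmin h hε0 hε1 ⟨le_refl 0, zero_le_one⟩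
  have huI : ∀ i, u (Pi.single i 1) ∈ Icc (0:ℝ) 1 :=
    fun i => tau_Icc b w hwmin h (single_mem_stdSimplex ℝ i)
  refine ⟨u, l, ?_, ?_, ?_, ?_, ?_, ?_⟩
  · exact fun p hp q hq => tau_rep b w hbmax hwmin h hp hq
  · apply Set.eq_of_subset_of_subset
    · rintro y ⟨p, hp, rfl⟩
      exact tau_Icc b w hwmin h hp
    · intro y hy
      exact ⟨mseg b w y, mseg_mem b w hy, tau_mseg b w hbmax hwmin h hε0 hε1 hy⟩
  · apply Set.eq_of_subset_of_subset
    · rintro y ⟨p, hp, rfl⟩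
      constructor
      · apply Finset.sum_nonneg
        intro i _
        exact mul_nonneg (hp.1 i) (huI i).1
      · calc ∑ i, p i * u (Pi.single i 1) ≤ ∑ i, p i :=
            Finset.sum_le_sum (fun i _ => by
              calc p i * u (Pi.single i 1) ≤ p i * 1 :=
                    mul_le_mul_of_nonneg_left (huI i).2 (hp.1 i)
                _ = p i := mul_one _)
          _ = 1 := hp.2
    · intro y hy
      refine ⟨mseg b w y, mseg_mem b w hy, ?_⟩
      show ∑ i, mseg b w y i * u (Pi.single i 1) = y
      have hexp : ∀ i, mseg b w y i * u (Pi.single i 1)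
          = y * ((Pi.single b 1 : Fin n → ℝ) i * u (Pi.single i 1))
            + (1 - y) * ((Pi.single w 1 : Fin n → ℝ) i * u (Pi.single i 1)) := by
        intro i
        unfold mseg
        simp only [Pi.add_apply, Pi.smul_apply, smul_eq_mul]
        ring
      rw [Finset.sum_congr rfl (fun i _ => hexp i), Finset.sum_add_distrib,
        ← Finset.mul_sum, ← Finset.mul_sum, sum_single_mul, sum_single_mul,
        hub, huw]
      ring
  · intro i
    show u (Pi.single i 1) = ∑ j, (Pi.single i 1 : Fin n → ℝ) j * u (Pi.single j 1)
    rw [sum_single_mul]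
  · intro p hp q hq t ht
    show ∑ i, (t • p + (1 - t) • q) i * u (Pi.single i 1) = _
    have hexp : ∀ i, (t • p + (1 - t) • q) i * u (Pi.single i 1)
        = t * (p i * u (Pi.single i 1)) + (1 - t) * (q i * u (Pi.single i 1)) := by
      intro i
      simp only [Pi.add_apply, Pi.smul_apply, smul_eq_mul]
      ring
    rw [Finset.sum_congr rfl (fun i _ => hexp i), Finset.sum_add_distrib,
      ← Finset.mul_sum, ← Finset.mul_sum]
  · intro p hp
    have := peel b w hbmax hwmin h hε0 hε1 n Finset.univ (by simp) p hp
      (fun i hi => absurd (Finset.mem_univ i) hi)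
    simpa using this

section Iso

variable (b w : Fin n)
variable (hbmax : ∀ p ∈ stdSimplex ℝ (Fin n), R (Pi.single b 1) p)
variable (hwmin : ∀ p ∈ stdSimplex ℝ (Fin n), R p (Pi.single w 1))

/-- top of the indifference class of a position. -/
noncomputable def Bf (x : ℝ) : ℝ := tau (R := R) b w (mseg b w x)

include hwmin in
lemma Bf_Icc (h : H n ε R) {x : ℝ} (hx : x ∈ Icc (0:ℝ) 1) :
    Bf (R := R) b w x ∈ Icc (0:ℝ) 1 := tau_Icc b w hwmin h (mseg_mem b w hx)

include hwmin in
lemma Bf_ge (h : H n ε R) {x : ℝ} (hx : x ∈ Icc (0:ℝ) 1) : x ≤ Bf (R := R) b w x :=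
  le_csSup (tauSet_bddAbove b w _) ⟨hx, h.refl (mseg_mem b w hx)⟩

include hbmax hwmin in
lemma Bf_sim (h : H n ε R) {x : ℝ} (hx : x ∈ Icc (0:ℝ) 1) :
    R (mseg b w x) (mseg b w (Bf (R := R) b w x)) ∧
    R (mseg b w (Bf (R := R) b w x)) (mseg b w x) :=
  ⟨tau_R b w hwmin h (mseg_mem b w hx), tau_calib b w hbmax hwmin h (mseg_mem b w hx)⟩

include hbmax hwmin in
lemma tau_eq_of_sim (h : H n ε R) {p q : Fin n → ℝ} (hp : p ∈ S) (hq : q ∈ S)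
    (hsim : R p q ∧ R q p) : tau (R := R) b w p = tau (R := R) b w q :=
  le_antisymm ((tau_rep b w hbmax hwmin h hq hp).mp hsim.2)
    ((tau_rep b w hbmax hwmin h hp hq).mp hsim.1)

include hbmax hwmin in
lemma Bf_idem (h : H n ε R) {x : ℝ} (hx : x ∈ Icc (0:ℝ) 1) :
    Bf (R := R) b w (Bf (R := R) b w x) = Bf (R := R) b w x := by
  have h1 := Bf_sim b w hbmax hwmin h hx
  have h2 : Bf (R := R) b w x ∈ Icc (0:ℝ) 1 := Bf_Icc b w hwmin h hx
  exact tau_eq_of_sim b w hbmax hwmin h (mseg_mem b w h2) (mseg_mem b w hx) ⟨h1.2, h1.1⟩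

include hbmax hwmin in
lemma Bf_mono (h : H n ε R) {x y : ℝ} (hx : x ∈ Icc (0:ℝ) 1) (hy : y ∈ Icc (0:ℝ) 1)
    (hxy : x ≤ y) : Bf (R := R) b w x ≤ Bf (R := R) b w y :=
  (tau_rep b w hbmax hwmin h (mseg_mem b w hy) (mseg_mem b w hx)).mp
    (mseg_mono b w hbmax h hx.1 hxy hy.2)

/-- bottom of the indifference class of a position. -/
noncomputable def Af (y : ℝ) : ℝ :=
  sInf {z : ℝ | z ∈ Icc (0:ℝ) 1 ∧ R (mseg b w z) (mseg b w y) ∧ R (mseg b w y) (mseg b w z)}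

include hbmax hwmin in
lemma Af_spec (h : H n ε R) {y : ℝ} (hy : y ∈ Icc (0:ℝ) 1) :
    Af (R := R) b w y ∈ Icc (0:ℝ) 1 ∧ Af (R := R) b w y ≤ y ∧
    (R (mseg b w (Af (R := R) b w y)) (mseg b w y) ∧
     R (mseg b w y) (mseg b w (Af (R := R) b w y))) := by
  have hmy : mseg b w y ∈ S := mseg_mem b w hy
  set C : Set ℝ := {z : ℝ | z ∈ Icc (0:ℝ) 1 ∧ R (mseg b w z) (mseg b w y) ∧
      R (mseg b w y) (mseg b w z)} with hC
  have hCc : IsClosed C := by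
    have : C = (Icc (0:ℝ) 1 ∩ mseg b w ⁻¹' {q | q ∈ S ∧ R q (mseg b w y)}) ∩
        (Icc (0:ℝ) 1 ∩ mseg b w ⁻¹' {q | q ∈ S ∧ R (mseg b w y) q}) := by
      ext z
      constructor
      · rintro ⟨hz, h1, h2⟩
        exact ⟨⟨hz, mseg_mem b w hz, h1⟩, ⟨hz, mseg_mem b w hz, h2⟩⟩
      · rintro ⟨⟨hz, _, h1⟩, ⟨_, _, h2⟩⟩
        exact ⟨hz, h1, h2⟩
    rw [this]
    exact (isClosed_Icc.inter ((h.cont _ hmy).1.preimage (mseg_cont b w))).inter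
      (isClosed_Icc.inter ((h.cont _ hmy).2.preimage (mseg_cont b w)))
  have hyC : y ∈ C := ⟨hy, h.refl hmy, h.refl hmy⟩
  have hbdd : BddBelow C := ⟨0, fun z hz => hz.1.1⟩
  have hmem : Af (R := R) b w y ∈ C := hCc.csInf_mem ⟨y, hyC⟩ hbdd
  exact ⟨hmem.1, csInf_le hbdd hyC, hmem.2⟩

include hbmax hwmin in
lemma Af_min (h : H n ε R) {y z : ℝ} (hy : y ∈ Icc (0:ℝ) 1) (hz : z ∈ Icc (0:ℝ) 1)
    (hsim : R (mseg b w z) (mseg b w y) ∧ R (mseg b w y) (mseg b w z)) :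
    Af (R := R) b w y ≤ z :=
  csInf_le ⟨0, fun u hu => hu.1.1⟩ ⟨hz, hsim⟩

include hbmax hwmin in
/-- strict separation of classes: top of the lower is below the bottom of the upper. -/
lemma sep (h : H n ε R) {x y : ℝ} (hx : x ∈ Icc (0:ℝ) 1) (hy : y ∈ Icc (0:ℝ) 1)
    (hup : R (mseg b w y) (mseg b w x)) (hnsim : ¬ R (mseg b w x) (mseg b w y)) :
    Bf (R := R) b w x < Af (R := R) b w y := by
  by_contra hcon
  have hle : Af (R := R) b w y ≤ Bf (R := R) b w x := not_lt.mp hcon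
  have hAfI := (Af_spec b w hbmax hwmin h hy).1
  have hBfI := Bf_Icc b w hwmin h hx
  have hmono : R (mseg b w (Bf (R := R) b w x)) (mseg b w (Af (R := R) b w y)) :=
    mseg_mono b w hbmax h hAfI.1 hle hBfI.2
  have hsimB := Bf_sim b w hbmax hwmin h hx
  have hsimA := (Af_spec b w hbmax hwmin h hy).2.2
  have hmx : mseg b w x ∈ S := mseg_mem b w hx
  have hmy : mseg b w y ∈ S := mseg_mem b w hy
  have hmB : mseg b w (Bf (R := R) b w x) ∈ S := mseg_mem b w hBfI
  have hmA : mseg b w (Af (R := R) b w y) ∈ S := mseg_mem b w hAfI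
  exact hnsim (h.trans _ hmx _ hmB _ hmy hsimB.1
    (h.trans _ hmB _ hmA _ hmy hmono hsimA.1))

include hbmax hwmin in
/-- between two strictly ordered classes there is a "rational" class, whose top
is strictly between them. -/
lemma exists_mid (h : H n ε R) {x y : ℝ} (hx : x ∈ Icc (0:ℝ) 1) (hy : y ∈ Icc (0:ℝ) 1)
    (hup : R (mseg b w y) (mseg b w x)) (hnsim : ¬ R (mseg b w x) (mseg b w y)) :
    ∃ z, z ∈ Icc (0:ℝ) 1 ∧ Bf (R := R) b w z = z ∧
      (R (mseg b w z) (mseg b w x) ∧ ¬ R (mseg b w x) (mseg b w z)) ∧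
      (R (mseg b w y) (mseg b w z) ∧ ¬ R (mseg b w z) (mseg b w y)) ∧
      ∃ qq : ℚ, (qq:ℝ) ∈ Icc (0:ℝ) 1 ∧
        (R (mseg b w z) (mseg b w (qq:ℝ)) ∧ R (mseg b w (qq:ℝ)) (mseg b w z)) := by
  have hsep := sep b w hbmax hwmin h hx hy hup hnsim
  obtain ⟨qq, hq1, hq2⟩ := exists_rat_btwn hsep
  have hBfI := Bf_Icc b w hwmin h hx
  have hAfs := Af_spec b w hbmax hwmin h hy
  have hqI : (qq:ℝ) ∈ Icc (0:ℝ) 1 :=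
    ⟨le_trans hBfI.1 hq1.le, le_trans hq2.le (le_trans hAfs.2.1 hy.2)⟩
  set z := Bf (R := R) b w (qq:ℝ) with hz
  have hzI : z ∈ Icc (0:ℝ) 1 := Bf_Icc b w hwmin h hqI
  have hsimq := Bf_sim b w hbmax hwmin h hqI
  have hqz : (qq:ℝ) ≤ z := Bf_ge b w hwmin h hqI
  have hmx := mseg_mem b w hx
  have hmy := mseg_mem b w hy
  have hmq := mseg_mem b w hqI
  have hmz := mseg_mem b w hzI
  have hxq : x ≤ (qq:ℝ) := le_trans (Bf_ge b w hwmin h hx) hq1.le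
  -- z's class is strictly above x's class
  have hr1 : R (mseg b w z) (mseg b w x) :=
    mseg_mono b w hbmax h hx.1 (le_trans hxq hqz) hzI.2
  have hr2 : ¬ R (mseg b w x) (mseg b w z) := by
    intro hcon
    have hxzq : R (mseg b w x) (mseg b w (qq:ℝ)) :=
      h.trans _ hmx _ hmz _ hmq hcon hsimq.2
    have hqx : R (mseg b w (qq:ℝ)) (mseg b w x) :=
      mseg_mono b w hbmax h hx.1 hxq hqI.2
    have : Bf (R := R) b w (qq:ℝ) = Bf (R := R) b w x :=
      tau_eq_of_sim b w hbmax hwmin h hmq hmx ⟨hqx, hxzq⟩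
    rw [← hz] at this
    linarith [hqz, hq1, this.le]
  -- z's class is strictly below y's class
  have hnqy : ¬ R (mseg b w (qq:ℝ)) (mseg b w y) := by
    intro hcon
    have hyq : R (mseg b w y) (mseg b w (qq:ℝ)) :=
      mseg_mono b w hbmax h hqI.1 (le_trans hq2.le hAfs.2.1) hy.2
    have := Af_min b w hbmax hwmin h hy hqI ⟨hcon, hyq⟩
    linarith
  have hyq : R (mseg b w y) (mseg b w (qq:ℝ)) :=
    mseg_mono b w hbmax h hqI.1 (le_trans hq2.le hAfs.2.1) hy.2
  have hsep2 := sep b w hbmax hwmin h hqI hy hyq hnqy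
  have hzAf : z < Af (R := R) b w y := hsep2
  have hr3 : R (mseg b w y) (mseg b w z) :=
    mseg_mono b w hbmax h hzI.1 (le_trans hzAf.le hAfs.2.1) hy.2
  have hr4 : ¬ R (mseg b w z) (mseg b w y) := by
    intro hcon
    have := Af_min b w hbmax hwmin h hy hzI ⟨hcon, hr3⟩
    linarith
  exact ⟨z, hzI, Bf_idem b w hbmax hwmin h hqI, ⟨hr1, hr2⟩, ⟨hr3, hr4⟩,
    qq, hqI, ⟨hsimq.2, hsimq.1⟩⟩

include hbmax hwmin in
/-- the two endpoint classes are distinct. -/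
lemma not01 (h : H n ε R) : ¬ R (mseg b w 0) (mseg b w 1) := by
  intro h01
  obtain ⟨p, hp, q, hq, _, hnRqp⟩ := h.nontriv
  rw [mseg_zero, mseg_one] at h01
  have hwmem := single_mem_stdSimplex ℝ (i := w)
  have hbmem := single_mem_stdSimplex ℝ (i := b)
  exact hnRqp (h.trans q hq _ hwmem p hp (hwmin q hq)
    (h.trans _ hwmem _ hbmem p hp h01 (hbmax p hp)))

end Iso

/-! ### rationals in the open unit interval -/

abbrev Q01 : Type := {q : ℚ // 0 < q ∧ q < 1}

instance : DenselyOrdered Q01 := ⟨fun a c hac => by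
  obtain ⟨d, h1, h2⟩ := exists_between (show (a:ℚ) < (c:ℚ) from hac)
  exact ⟨⟨d, lt_trans a.2.1 h1, lt_trans h2 c.2.2⟩, h1, h2⟩⟩

instance : NoMinOrder Q01 := ⟨fun a => by
  obtain ⟨d, h1, h2⟩ := exists_between a.2.1
  exact ⟨⟨d, h1, lt_trans h2 a.2.2⟩, h2⟩⟩

instance : NoMaxOrder Q01 := ⟨fun a => by
  obtain ⟨d, h1, h2⟩ := exists_between a.2.2
  exact ⟨⟨d, lt_trans a.2.1 h1, h2⟩, h1⟩⟩

instance : Nonempty Q01 := ⟨⟨1/2, by norm_num⟩⟩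

/-- Main construction, general case (crude bound 1). -/
lemma main_ge1 (h : H n ε R) :
    ∃ u l : (Fin n → ℝ) → ℝ,
      (∀ p ∈ S, ∀ q ∈ S, (R p q ↔ u q ≤ u p)) ∧
      u '' S = Icc 0 1 ∧ l '' S = Icc 0 1 ∧
      (∀ i, u (Pi.single i 1) = l (Pi.single i 1)) ∧
      (∀ p ∈ S, ∀ q ∈ S, ∀ t ∈ Icc (0:ℝ) 1,
        l (t • p + (1 - t) • q) = t * l p + (1 - t) * l q) ∧
      (∀ p ∈ S, |u p - l p| ≤ 1) := by
  classical
  obtain ⟨p₀, hp₀, _⟩ := h.nontriv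
  have hn0 : n ≠ 0 := by
    rintro rfl
    have := hp₀.2
    simp at this
  haveI : Nonempty (Fin n) := ⟨⟨0, Nat.pos_of_ne_zero hn0⟩⟩
  obtain ⟨b, _, hb'⟩ := finset_max h (s := Finset.univ) Finset.univ_nonempty
  obtain ⟨w, _, hw'⟩ := finset_min h (s := Finset.univ) Finset.univ_nonempty
  have hbmax := max_on_simplex h (fun i => hb' i (Finset.mem_univ i))
  have hwmin := min_on_simplex h (fun i => hw' i (Finset.mem_univ i))
  have hI0 : (0:ℝ) ∈ Icc (0:ℝ) 1 := ⟨le_refl 0, zero_le_one⟩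
  have hI1 : (1:ℝ) ∈ Icc (0:ℝ) 1 := ⟨zero_le_one, le_refl 1⟩
  -- the countable dense set of class-tops
  set Dset : Set ℝ := {z | z ∈ Icc (0:ℝ) 1 ∧ Bf (R := R) b w z = z ∧
      ¬ R (mseg b w 0) (mseg b w z) ∧ ¬ R (mseg b w z) (mseg b w 1) ∧
      ∃ qq : ℚ, (qq:ℝ) ∈ Icc (0:ℝ) 1 ∧
        (R (mseg b w z) (mseg b w (qq:ℝ)) ∧ R (mseg b w (qq:ℝ)) (mseg b w z))} with hDset
  have hcount : Dset.Countable := by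
    apply (Set.countable_range (fun qq : ℚ => Bf (R := R) b w (qq:ℝ))).mono
    rintro z ⟨hzI, hztop, _, _, qq, hqI, hsim⟩
    refine ⟨qq, ?_⟩
    show Bf (R := R) b w (qq:ℝ) = z
    have : Bf (R := R) b w (qq:ℝ) = Bf (R := R) b w z :=
      tau_eq_of_sim b w hbmax hwmin h (mseg_mem b w hqI) (mseg_mem b w hzI)
        ⟨hsim.2, hsim.1⟩
    rw [this, hztop]
  haveI := hcount.to_subtype
  -- strict ordering of distinct tops
  have hpair : ∀ z1 z2 : ℝ, z1 ∈ Dset → z2 ∈ Dset → z1 < z2 →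
      R (mseg b w z2) (mseg b w z1) ∧ ¬ R (mseg b w z1) (mseg b w z2) := by
    intro z1 z2 hz1 hz2 hlt
    refine ⟨mseg_mono b w hbmax h hz1.1.1 hlt.le hz2.1.2, ?_⟩
    intro hcon
    have hup : R (mseg b w z2) (mseg b w z1) :=
      mseg_mono b w hbmax h hz1.1.1 hlt.le hz2.1.2
    have heq : Bf (R := R) b w z1 = Bf (R := R) b w z2 :=
      tau_eq_of_sim b w hbmax hwmin h (mseg_mem b w hz1.1) (mseg_mem b w hz2.1)
        ⟨hcon, hup⟩
    rw [hz1.2.1, hz2.2.1] at heq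
    exact absurd heq (ne_of_lt hlt)
  -- midpoints land in Dset
  have hmidD : ∀ x y : ℝ, x ∈ Icc (0:ℝ) 1 → y ∈ Icc (0:ℝ) 1 →
      R (mseg b w y) (mseg b w x) → ¬ R (mseg b w x) (mseg b w y) →
      ∃ z ∈ Dset, x < z ∧ z < y ∧
        ¬ R (mseg b w x) (mseg b w z) ∧ ¬ R (mseg b w z) (mseg b w y) := by
    intro x y hx hy hup hnsim
    obtain ⟨z, hzI, hztop, ⟨hr1, hr2⟩, ⟨hr3, hr4⟩, qq, hqI, hsimq⟩ :=
      exists_mid b w hbmax hwmin h hx hy hup hnsim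
    have hmx := mseg_mem b w hx
    have hmy := mseg_mem b w hy
    have hmz := mseg_mem b w hzI
    have hm0 := mseg_mem b w hI0
    have hm1 := mseg_mem b w hI1
    have hxz : x < z := by
      by_contra hcon
      exact hr2 (mseg_mono b w hbmax h hzI.1 (not_lt.mp hcon) hx.2)
    have hzy : z < y := by
      by_contra hcon
      exact hr4 (mseg_mono b w hbmax h hy.1 (not_lt.mp hcon) hzI.2)
    have hnb : ¬ R (mseg b w 0) (mseg b w z) := by
      intro hcon
      exact hr2 (h.trans _ hmx _ hm0 _ hmz
        (mseg_mono b w hbmax h (le_refl 0) hx.1 hx.2) hcon)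
    have hnt : ¬ R (mseg b w z) (mseg b w 1) := by
      intro hcon
      exact hr4 (h.trans _ hmz _ hm1 _ hmy hcon
        (mseg_mono b w hbmax h hy.1 hy.2 (le_refl 1)))
    exact ⟨z, ⟨hzI, hztop, hnb, hnt, qq, hqI, hsimq⟩, hxz, hzy, hr2, hr4⟩
  -- instances on the subtype
  haveI hDne : Nonempty ↥Dset := by
    obtain ⟨z, hz, _⟩ := hmidD 0 1 hI0 hI1
      (mseg_mono b w hbmax h (le_refl 0) zero_le_one (le_refl 1))
      (not01 b w hbmax hwmin h)
    exact ⟨⟨z, hz⟩⟩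
  haveI : DenselyOrdered ↥Dset := by
    constructor
    intro a c hac
    have hlt : (a:ℝ) < (c:ℝ) := hac
    obtain ⟨hup, hnsim⟩ := hpair a c a.2 c.2 hlt
    obtain ⟨z, hz, h1, h2, _, _⟩ := hmidD a c a.2.1 c.2.1 hup hnsim
    exact ⟨⟨z, hz⟩, h1, h2⟩
  haveI : NoMinOrder ↥Dset := by
    constructor
    intro a
    have hup : R (mseg b w (a:ℝ)) (mseg b w 0) :=
      mseg_mono b w hbmax h (le_refl 0) a.2.1.1 a.2.1.2
    obtain ⟨z, hz, _, h2, _, _⟩ := hmidD 0 a hI0 a.2.1 hup a.2.2.2.1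
    exact ⟨⟨z, hz⟩, h2⟩
  haveI : NoMaxOrder ↥Dset := by
    constructor
    intro a
    have hup : R (mseg b w 1) (mseg b w (a:ℝ)) :=
      mseg_mono b w hbmax h a.2.1.1 a.2.1.2 (le_refl 1)
    obtain ⟨z, hz, h1, _, _, _⟩ := hmidD a 1 a.2.1 hI1 hup a.2.2.2.2.1
    exact ⟨⟨z, hz⟩, h1⟩
  obtain ⟨φ⟩ := Order.iso_of_countable_dense (↥Dset) Q01
  set vφ : ↥Dset → ℝ := fun z => (((φ z : Q01) : ℚ) : ℝ) with hvφ
  have hv0 : ∀ z, 0 < vφ z := fun z => by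
    have := (φ z).2.1
    simp only [hvφ]
    exact_mod_cast this
  have hv1 : ∀ z, vφ z < 1 := fun z => by
    have := (φ z).2.2
    simp only [hvφ]
    exact_mod_cast this
  have hvmono : ∀ z1 z2 : ↥Dset, z1 < z2 → vφ z1 < vφ z2 := by
    intro z1 z2 hlt
    have : φ z1 < φ z2 := φ.lt_iff_lt.mpr hlt
    have h2 : ((φ z1 : Q01) : ℚ) < ((φ z2 : Q01) : ℚ) := this
    simp only [hvφ]
    exact_mod_cast h2
  have hvsurj : ∀ q : ℚ, 0 < q → q < 1 → ∃ z : ↥Dset, vφ z = (q:ℝ) := by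
    intro q h0 h1
    refine ⟨φ.symm ⟨q, h0, h1⟩, ?_⟩
    simp only [hvφ, OrderIso.apply_symm_apply]
  -- the utility function
  set F : ℝ → ℝ := fun x => sSup (insert (0:ℝ) (vφ '' {z : ↥Dset | (z:ℝ) ≤ x})) with hF
  have hFbdd : ∀ x : ℝ, BddAbove (insert (0:ℝ) (vφ '' {z : ↥Dset | (z:ℝ) ≤ x})) := by
    intro x
    refine ⟨1, ?_⟩
    rintro v (rfl | ⟨z, _, rfl⟩)
    · exact zero_le_one
    · exact (hv1 z).le
  have hFne : ∀ x : ℝ, (insert (0:ℝ) (vφ '' {z : ↥Dset | (z:ℝ) ≤ x})).Nonempty :=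
    fun x => ⟨0, Set.mem_insert _ _⟩
  have hF0 : ∀ x, 0 ≤ F x := fun x => le_csSup (hFbdd x) (Set.mem_insert _ _)
  have hF1 : ∀ x, F x ≤ 1 := by
    intro x
    apply csSup_le (hFne x)
    rintro v (rfl | ⟨z, _, rfl⟩)
    · exact zero_le_one
    · exact (hv1 z).le
  have hFmono : ∀ x y : ℝ, x ≤ y → F x ≤ F y := by
    intro x y hxy
    apply csSup_le_csSup (hFbdd y) (hFne x)
    rintro v (rfl | ⟨z, hz, rfl⟩)
    · exact Set.mem_insert _ _
    · exact Set.mem_insert_of_mem _ ⟨z, le_trans hz hxy, rfl⟩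
  set u : (Fin n → ℝ) → ℝ := fun p => F (tau (R := R) b w p) with hu
  set l : (Fin n → ℝ) → ℝ := fun p => ∑ i, p i * u (Pi.single i 1) with hl
  -- strict monotonicity of u
  have hustrict : ∀ p ∈ S, ∀ q ∈ S, R p q → ¬ R q p → u q < u p := by
    intro p hp q hq hpq hnqp
    set x := tau (R := R) b w q with hx
    set y := tau (R := R) b w p with hy
    have hxI : x ∈ Icc (0:ℝ) 1 := tau_Icc b w hwmin h hq
    have hyI : y ∈ Icc (0:ℝ) 1 := tau_Icc b w hwmin h hp
    have hmx := mseg_mem b w hxI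
    have hmy := mseg_mem b w hyI
    have hxy : x ≤ y := (tau_rep b w hbmax hwmin h hp hq).mp hpq
    have hup : R (mseg b w y) (mseg b w x) := mseg_mono b w hbmax h hxI.1 hxy hyI.2
    have hnsim : ¬ R (mseg b w x) (mseg b w y) := by
      intro hcon
      apply hnqp
      have c1 : R q (mseg b w x) := tau_R b w hwmin h hq
      have c2 : R (mseg b w y) p := tau_calib b w hbmax hwmin h hp
      exact h.trans q hq _ hmx p hp c1 (h.trans _ hmx _ hmy p hp hcon c2)
    obtain ⟨z, hz, hxz, hzy, hnxz, hnzy⟩ := hmidD x y hxI hyI hup hnsim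
    have hzI : z ∈ Icc (0:ℝ) 1 := hz.1
    have hup2 : R (mseg b w z) (mseg b w x) :=
      mseg_mono b w hbmax h hxI.1 hxz.le hzI.2
    obtain ⟨z', hz', _, hz'z, hnxz', hnz'z⟩ := hmidD x z hxI hzI hup2 hnxz
    -- F x ≤ vφ z' < vφ z ≤ F y
    have hfx : F x ≤ vφ ⟨z', hz'⟩ := by
      apply csSup_le (hFne x)
      rintro v (rfl | ⟨z₀, hz₀, rfl⟩)
      · exact (hv0 _).le
      · refine (hvmono z₀ ⟨z', hz'⟩ ?_).le
        show (z₀:ℝ) < z'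
        by_contra hc
        exact hnxz' (mseg_mono b w hbmax h hz'.1.1 (le_trans (not_lt.mp hc) hz₀) hxI.2)
    have hmid2 : vφ ⟨z', hz'⟩ < vφ ⟨z, hz⟩ := by
      apply hvmono
      show (z':ℝ) < z
      exact hz'z
    have hfy : vφ ⟨z, hz⟩ ≤ F y := by
      apply le_csSup (hFbdd y)
      exact Set.mem_insert_of_mem _ ⟨⟨z, hz⟩, hzy.le, rfl⟩
    calc u q = F x := rfl
      _ < F y := lt_of_le_of_lt hfx (lt_of_lt_of_le hmid2 hfy)
      _ = u p := rfl
  have hrep : ∀ p ∈ S, ∀ q ∈ S, (R p q ↔ u q ≤ u p) := by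
    intro p hp q hq
    constructor
    · intro hpq
      exact hFmono _ _ ((tau_rep b w hbmax hwmin h hp hq).mp hpq)
    · intro hle
      by_contra hnR
      rcases h.comp p hp q hq with h1 | h1
      · exact hnR h1
      · exact absurd hle (not_le.mpr (hustrict q hq p hp h1 hnR))
  have hw0 : Pi.single w (1:ℝ) = mseg b w 0 := (mseg_zero b w).symm
  have hb1 : Pi.single b (1:ℝ) = mseg b w 1 := (mseg_one b w).symm
  have htau1 : tau (R := R) b w (mseg b w 1) = 1 := by
    apply le_antisymm (tau_Icc b w hwmin h (mseg_mem b w hI1)).2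
    exact le_csSup (tauSet_bddAbove b w _) ⟨hI1, h.refl (mseg_mem b w hI1)⟩
  have hFB0 : F (Bf (R := R) b w 0) = 0 := by
    have hempty : {z : ↥Dset | (z:ℝ) ≤ Bf (R := R) b w 0} = ∅ := by
      ext z
      simp only [Set.mem_setOf_eq, Set.mem_empty_iff_false, iff_false]
      intro hle
      apply z.2.2.2.1
      have hBf0I := Bf_Icc b w hwmin h hI0
      have hs := Bf_sim b w hbmax hwmin h hI0
      exact h.trans _ (mseg_mem b w hI0) _ (mseg_mem b w hBf0I) _ (mseg_mem b w z.2.1)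
        hs.1 (mseg_mono b w hbmax h z.2.1.1 hle hBf0I.2)
    show sSup (insert (0:ℝ) (vφ '' {z : ↥Dset | (z:ℝ) ≤ Bf (R := R) b w 0})) = 0
    rw [hempty]
    simp
  have huw : u (Pi.single w 1) = 0 := by
    show F (tau (R := R) b w (Pi.single w 1)) = 0
    rw [hw0]
    exact hFB0
  have hFone : F 1 = 1 := by
    apply le_antisymm (hF1 1)
    by_contra hc
    have hc' : F 1 < 1 := not_le.mp hc
    obtain ⟨q, hq1, hq2⟩ := exists_rat_btwn (show max (F 1) 0 < 1 from max_lt hc' one_pos)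
    have hq0 : (0:ℚ) < q := by exact_mod_cast lt_of_le_of_lt (le_max_right _ _) hq1
    have hqlt : q < 1 := by exact_mod_cast hq2
    obtain ⟨z, hz⟩ := hvsurj q hq0 hqlt
    have hle : vφ z ≤ F 1 := le_csSup (hFbdd 1) (Set.mem_insert_of_mem _ ⟨z, z.2.1.2, rfl⟩)
    rw [hz] at hle
    have : F 1 < (q:ℝ) := lt_of_le_of_lt (le_max_left _ _) hq1
    linarith
  have hub : u (Pi.single b 1) = 1 := by
    show F (tau (R := R) b w (Pi.single b 1)) = 1
    rw [hb1, htau1, hFone]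
  have huI : ∀ i, u (Pi.single i 1) ∈ Icc (0:ℝ) 1 := fun i => ⟨hF0 _, hF1 _⟩
  have himg : u '' S = Icc 0 1 := by
    apply Set.eq_of_subset_of_subset
    · rintro y ⟨p, hp, rfl⟩
      exact ⟨hF0 _, hF1 _⟩
    · intro y hy
      rcases eq_or_lt_of_le hy.1 with hy0 | hy0
      · exact ⟨Pi.single w 1, single_mem_stdSimplex ℝ w, by rw [huw, ← hy0]⟩
      rcases eq_or_lt_of_le hy.2 with hy1 | hy1
      · exact ⟨Pi.single b 1, single_mem_stdSimplex ℝ b, by rw [hub, hy1]⟩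
      set E : Set ℝ := insert (0:ℝ) (Subtype.val '' {z : ↥Dset | vφ z < y}) with hE
      have hEbdd : BddAbove E := by
        refine ⟨1, ?_⟩
        rintro v (rfl | ⟨z, _, rfl⟩)
        · exact zero_le_one
        · exact z.2.1.2
      have hEne : E.Nonempty := ⟨0, Set.mem_insert _ _⟩
      set x' := sSup E with hx'
      have hx'I : x' ∈ Icc (0:ℝ) 1 := by
        constructor
        · exact le_csSup hEbdd (Set.mem_insert _ _)
        · apply csSup_le hEne
          rintro v (rfl | ⟨z, _, rfl⟩)
          · exact zero_le_one
          · exact z.2.1.2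
      refine ⟨mseg b w x', mseg_mem b w hx'I, ?_⟩
      show F (tau (R := R) b w (mseg b w x')) = y
      have hBfx : tau (R := R) b w (mseg b w x') = Bf (R := R) b w x' := rfl
      rw [hBfx]
      have hBfI := Bf_Icc b w hwmin h hx'I
      have hBfge := Bf_ge b w hwmin h hx'I
      apply le_antisymm
      · apply csSup_le (hFne _)
        rintro v (rfl | ⟨z, hzle, rfl⟩)
        · exact hy.1
        · by_contra hc
          have hvy : y < vφ z := not_le.mp hc
          obtain ⟨r, hr1, hr2⟩ := exists_rat_btwn hvy
          have hr0 : (0:ℚ) < r := by exact_mod_cast lt_trans hy0 hr1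
          have hrlt : r < 1 := by exact_mod_cast lt_trans hr2 (hv1 z)
          obtain ⟨z₂, hz₂⟩ := hvsurj r hr0 hrlt
          have hz₂z : z₂ < z := by
            by_contra hc2
            have hle2 : vφ z ≤ vφ z₂ := by
              rcases eq_or_lt_of_le (not_lt.mp hc2) with he | hlt2
              · rw [he]
              · exact (hvmono _ _ hlt2).le
            rw [hz₂] at hle2
            linarith
          have hx'le : x' ≤ (z₂:ℝ) := by
            apply csSup_le hEne
            rintro v (rfl | ⟨z₀, hz₀, rfl⟩)
            · exact z₂.2.1.1
            · have hlt3 : z₀ < z₂ := by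
                by_contra hc3
                have hle3 : vφ z₂ ≤ vφ z₀ := by
                  rcases eq_or_lt_of_le (not_lt.mp hc3) with he | hlt4
                  · rw [he]
                  · exact (hvmono _ _ hlt4).le
                rw [hz₂] at hle3
                have := hz₀
                simp only [Set.mem_setOf_eq] at this
                linarith
              exact (Subtype.coe_lt_coe.mpr hlt3).le
          have h1 : Bf (R := R) b w x' ≤ Bf (R := R) b w (z₂:ℝ) :=
            Bf_mono b w hbmax hwmin h hx'I z₂.2.1 hx'le
          rw [z₂.2.2.1] at h1
          have h3 : (z₂:ℝ) < (z:ℝ) := hz₂z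
          have hzle' : (z:ℝ) ≤ Bf (R := R) b w x' := hzle
          linarith
      · by_contra hc
        have hc' : F (Bf (R := R) b w x') < y := not_le.mp hc
        obtain ⟨q, hq1, hq2⟩ := exists_rat_btwn
          (show max (F (Bf (R := R) b w x')) 0 < y from max_lt hc' hy0)
        have hq0 : (0:ℚ) < q := by exact_mod_cast lt_of_le_of_lt (le_max_right _ _) hq1
        have hqlt : q < 1 := by exact_mod_cast lt_trans hq2 hy1
        obtain ⟨z, hz⟩ := hvsurj q hq0 hqlt
        have hzE : (z:ℝ) ∈ E := by
          apply Set.mem_insert_of_mem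
          exact ⟨z, by simp only [Set.mem_setOf_eq, hz]; exact hq2, rfl⟩
        have hzx' : (z:ℝ) ≤ x' := le_csSup hEbdd hzE
        have hle4 : vφ z ≤ F (Bf (R := R) b w x') :=
          le_csSup (hFbdd _) (Set.mem_insert_of_mem _ ⟨z, le_trans hzx' hBfge, rfl⟩)
        rw [hz] at hle4
        have : F (Bf (R := R) b w x') < (q:ℝ) := lt_of_le_of_lt (le_max_left _ _) hq1
        linarith
  refine ⟨u, l, hrep, himg, ?_, ?_, ?_, ?_⟩
  · apply Set.eq_of_subset_of_subset
    · rintro y ⟨p, hp, rfl⟩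
      constructor
      · apply Finset.sum_nonneg
        intro i _
        exact mul_nonneg (hp.1 i) (huI i).1
      · calc ∑ i, p i * u (Pi.single i 1) ≤ ∑ i, p i :=
            Finset.sum_le_sum (fun i _ => by
              calc p i * u (Pi.single i 1) ≤ p i * 1 :=
                    mul_le_mul_of_nonneg_left (huI i).2 (hp.1 i)
                _ = p i := mul_one _)
          _ = 1 := hp.2
    · intro y hy
      refine ⟨mseg b w y, mseg_mem b w hy, ?_⟩
      show ∑ i, mseg b w y i * u (Pi.single i 1) = y
      have hexp : ∀ i, mseg b w y i * u (Pi.single i 1)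
          = y * ((Pi.single b 1 : Fin n → ℝ) i * u (Pi.single i 1))
            + (1 - y) * ((Pi.single w 1 : Fin n → ℝ) i * u (Pi.single i 1)) := by
        intro i
        unfold mseg
        simp only [Pi.add_apply, Pi.smul_apply, smul_eq_mul]
        ring
      rw [Finset.sum_congr rfl (fun i _ => hexp i), Finset.sum_add_distrib,
        ← Finset.mul_sum, ← Finset.mul_sum, sum_single_mul, sum_single_mul,
        hub, huw]
      ring
  · intro i
    show u (Pi.single i 1) = ∑ j, (Pi.single i 1 : Fin n → ℝ) j * u (Pi.single j 1)
    rw [sum_single_mul]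
  · intro p hp q hq t ht
    show ∑ i, (t • p + (1 - t) • q) i * u (Pi.single i 1) = _
    have hexp : ∀ i, (t • p + (1 - t) • q) i * u (Pi.single i 1)
        = t * (p i * u (Pi.single i 1)) + (1 - t) * (q i * u (Pi.single i 1)) := by
      intro i
      simp only [Pi.add_apply, Pi.smul_apply, smul_eq_mul]
      ring
    rw [Finset.sum_congr rfl (fun i _ => hexp i), Finset.sum_add_distrib,
      ← Finset.mul_sum, ← Finset.mul_sum]
  · intro p hp
    have hu0 : 0 ≤ u p := hF0 _
    have hu1 : u p ≤ 1 := hF1 _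
    have hl0 : 0 ≤ l p := Finset.sum_nonneg fun i _ => mul_nonneg (hp.1 i) (huI i).1
    have hl1 : l p ≤ 1 := by
      calc ∑ i, p i * u (Pi.single i 1) ≤ ∑ i, p i :=
          Finset.sum_le_sum (fun i _ => by
            calc p i * u (Pi.single i 1) ≤ p i * 1 :=
                  mul_le_mul_of_nonneg_left (huI i).2 (hp.1 i)
              _ = p i := mul_one _)
        _ = 1 := hp.2
    rw [abs_le]
    constructor
    · linarith
    · linarith

end EU3

/-- Theorem `thm:EU2`: a nontrivial continuous weak order on the simplex
satisfying ε-Independence admits a representation `u` and an affine `ℓ`, both onto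
`[0,1]`, agreeing on degenerate lotteries, with `|u - ℓ| < (d+1)²·ε`. -/
theorem stmt_3 (d : ℕ) (hd : 1 ≤ d) (ε : ℝ) (hε : 0 < ε)
    (R : (Fin (d + 1) → ℝ) → (Fin (d + 1) → ℝ) → Prop)
    (Δ : Set (Fin (d + 1) → ℝ)) (hΔ : Δ = stdSimplex ℝ (Fin (d + 1)))
    (hcomp : ∀ p ∈ Δ, ∀ q ∈ Δ, R p q ∨ R q p)
    (htrans : ∀ p ∈ Δ, ∀ q ∈ Δ, ∀ r ∈ Δ, R p q → R q r → R p r)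
    (hcont : ∀ p ∈ Δ, IsClosed {q | q ∈ Δ ∧ R q p} ∧ IsClosed {q | q ∈ Δ ∧ R p q})
    (hnontriv : ∃ p ∈ Δ, ∃ q ∈ Δ, R p q ∧ ¬ R q p)
    (hindep : ∀ p ∈ Δ, ∀ q ∈ Δ, (R p q ∧ R q p) →
      ∀ α ∈ Set.Icc (0 : ℝ) 1, ∀ r ∈ Δ, ∃ α' ∈ Set.Icc (0 : ℝ) 1,
        |α - α'| < ε ∧
        (R (α • p + (1 - α) • r) (α' • q + (1 - α') • r) ∧
          R (α' • q + (1 - α') • r) (α • p + (1 - α) • r))) :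
    ∃ u ℓ : (Fin (d + 1) → ℝ) → ℝ,
      -- (1)
      (∀ p ∈ Δ, ∀ q ∈ Δ, (R p q ↔ u q ≤ u p)) ∧
      u '' Δ = Set.Icc 0 1 ∧ ℓ '' Δ = Set.Icc 0 1 ∧
      (∀ i : Fin (d + 1), u (Pi.single i 1) = ℓ (Pi.single i 1)) ∧
      -- (2) ℓ is affine
      (∀ p ∈ Δ, ∀ q ∈ Δ, ∀ t ∈ Set.Icc (0 : ℝ) 1,
        ℓ (t • p + (1 - t) • q) = t * ℓ p + (1 - t) * ℓ q) ∧
      -- (3)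
      (∀ p ∈ Δ, |u p - ℓ p| < ((d : ℝ) + 1) ^ 2 * ε) := by
  subst hΔ
  have h : EU3.H (d + 1) ε R := ⟨hcomp, htrans, hcont, hnontriv, hindep⟩
  rcases lt_or_ge ε 1 with hε1 | hε1
  · obtain ⟨u, l, h1, h2, h3, h4, h5, h6⟩ := EU3.main_lt1 h hε hε1
    refine ⟨u, l, h1, h2, h3, h4, h5, ?_⟩
    intro p hp
    have hb := h6 p hp
    have hd' : 2 * ε * (((d + 1 : ℕ) : ℝ) - 1) < ((d : ℝ) + 1) ^ 2 * ε := by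
      push_cast
      nlinarith [mul_pos hε (show (0:ℝ) < (d:ℝ)^2 + 1 by positivity)]
    exact lt_of_le_of_lt hb hd'
  · obtain ⟨u, l, h1, h2, h3, h4, h5, h6⟩ := EU3.main_ge1 h
    refine ⟨u, l, h1, h2, h3, h4, h5, ?_⟩
    intro p hp
    have hb := h6 p hp
    have hd1 : (1 : ℝ) ≤ (d : ℝ) := by exact_mod_cast hd
    have : (1:ℝ) < ((d : ℝ) + 1) ^ 2 * ε := by nlinarith
    linarith
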